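/- arXiv:2506.15602 — 9 statements merged into one kernel-verified Lean document; each statement's English description precedes it below -/
import Mathlib

section
/- For every 1 ≤ k ≤ K and every x ∈ S_k, the mean hitting time of the optimal level decomposes over the intermediate levels as m(x) = Σ_{ℓ=1}^{k} Σ_{y∈S_ℓ} h(x,y) · m̄(y). -/
open Finset

/-- A finite state space partitioned into fitness levels `S_0, …, S_K`
(`lev x = k` means `x ∈ S_k`), together with an elitist row-stochastic
transition matrix `p`. -/
structure LevelChain (S : Type*) [Fintype S] where
  /-- the number of non-optimal levels -/
  K : ℕ
  /-- the level of each state -/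
  lev : S → ℕ
  one_le_K : 1 ≤ K
  lev_le : ∀ x, lev x ≤ K
  level_nonempty : ∀ k ≤ K, ∃ x, lev x = k
  /-- transition probabilities -/
  p : S → S → ℝ
  p_nonneg : ∀ x y, 0 ≤ p x y
  p_row_sum : ∀ x, ∑ y, p x y = 1
  elitist : ∀ x y, lev x < lev y → p x y = 0

variable {S : Type*} [Fintype S]

/-- The fitness level `S_k`. -/
def LevelChain.level (c : LevelChain S) (k : ℕ) : Finset S :=
  Finset.univ.filter fun x => c.lev x = k

/-- The union of levels `S_{[i,j]} = S_i ∪ ⋯ ∪ S_j`. -/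
def LevelChain.levels (c : LevelChain S) (i j : ℕ) : Finset S :=
  Finset.univ.filter fun x => i ≤ c.lev x ∧ c.lev x ≤ j

/-- `p(x, A) = Σ_{y ∈ A} p(x, y)`. -/
def LevelChain.pSet (c : LevelChain S) (x : S) (A : Finset S) : ℝ :=
  ∑ y ∈ A, c.p x y

/-- The standing reachability assumption: from every non-optimal state one can
move to a better level with positive probability. -/
def LevelChain.Reachable (c : LevelChain S) : Prop :=
  ∀ k, 1 ≤ k → k ≤ c.K → ∀ x, c.lev x = k → 0 < c.pSet x (c.levels 0 (k - 1))

/-- Conditional transition probability `r(x, S_j)`: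
`r(x,S_j) = p(x,S_j)/(1 − p(x,S_k))` for `j ≠ k = lev x`, and `r(x,S_k) = 0`. -/
noncomputable def LevelChain.r (c : LevelChain S) (x : S) (j : ℕ) : ℝ :=
  if j = c.lev x then 0
  else c.pSet x (c.level j) / (1 - c.pSet x (c.level (c.lev x)))

/-- `r_min(X_k, S_j) = min_{x ∈ S_k} r(x, S_j)`. -/
noncomputable def LevelChain.rmin (c : LevelChain S) (k j : ℕ) : ℝ :=
  sInf ((fun x => c.r x j) '' {x | c.lev x = k})

/-- `r_max(X_k, S_j) = max_{x ∈ S_k} r(x, S_j)`. -/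
noncomputable def LevelChain.rmax (c : LevelChain S) (k j : ℕ) : ℝ :=
  sSup ((fun x => c.r x j) '' {x | c.lev x = k})

/-- `m` is the mean hitting time of the optimal level `S_0`. -/
def LevelChain.IsMeanHittingTime (c : LevelChain S) (m : S → ℝ) : Prop :=
  (∀ x, 0 ≤ m x) ∧
  (∀ x, c.lev x = 0 → m x = 0) ∧
  (∀ x, c.lev x ≠ 0 → m x = 1 + ∑ y, c.p x y * m y)

/-- `mbar` is the mean level-leaving time on `S ∖ S_0`. -/
def LevelChain.IsLevelLeavingTime (c : LevelChain S) (mbar : S → ℝ) : Prop :=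
  (∀ x, c.lev x ≠ 0 → 0 ≤ mbar x) ∧
  (∀ x, c.lev x ≠ 0 → mbar x = 1 + ∑ y ∈ c.level (c.lev x), c.p x y * mbar y)

/-- `h ℓ x` is the probability of hitting level `S_ℓ` starting from `x`. -/
def LevelChain.IsHitProb (c : LevelChain S) (h : ℕ → S → ℝ) : Prop :=
  (∀ ℓ x, 0 ≤ h ℓ x ∧ h ℓ x ≤ 1) ∧
  (∀ ℓ x, c.lev x = ℓ → h ℓ x = 1) ∧
  (∀ ℓ x, c.lev x < ℓ → h ℓ x = 0) ∧
  (∀ ℓ x, ℓ < c.lev x →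
    h ℓ x = ∑ y ∈ c.levels ℓ (c.lev x), c.p x y * h ℓ y)

/-- Pointwise hitting probabilities `h x y` of hitting the level of `y`
at state `y`, for `y` in a non-optimal level. -/
def LevelChain.IsPointHitProb (c : LevelChain S) (h : S → S → ℝ) : Prop :=
  (∀ x y, 0 ≤ h x y ∧ h x y ≤ 1) ∧
  (∀ y, 1 ≤ c.lev y → h y y = 1) ∧
  (∀ x y, 1 ≤ c.lev y → c.lev x = c.lev y → x ≠ y → h x y = 0) ∧
  (∀ x y, 1 ≤ c.lev y → c.lev x < c.lev y → h x y = 0) ∧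
  (∀ x y, 1 ≤ c.lev y → c.lev y < c.lev x →
    h x y = ∑ z ∈ c.levels (c.lev y) (c.lev x), c.p x z * h z y)

/-- For every `1 ≤ k ≤ K` and every `x ∈ S_k`, the mean hitting time
of the optimal level decomposes over the intermediate levels as
`m(x) = Σ_{ℓ=1}^{k} Σ_{y ∈ S_ℓ} h(x,y)·m̄(y)`. -/
theorem meanHittingTime_decomposition
    (c : LevelChain S) (hreach : c.Reachable)
    (m mbar : S → ℝ) (h : S → S → ℝ)
    (hm : c.IsMeanHittingTime m)
    (hmbar : c.IsLevelLeavingTime mbar)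
    (hh : c.IsPointHitProb h) :
    ∀ k, 1 ≤ k → k ≤ c.K → ∀ x, c.lev x = k →
      m x = ∑ ℓ ∈ Finset.Icc 1 k, ∑ y ∈ c.level ℓ, h x y * mbar y := by
  classical
  obtain ⟨hh01, hh1, hhsame, hhlt, hhrec⟩ := hh
  obtain ⟨hmnn, hm0, hmrec⟩ := hm
  obtain ⟨hmb0, hmbrec⟩ := hmbar
  set F : S → ℕ → ℝ := fun x ℓ => ∑ y ∈ c.level ℓ, h x y * mbar y with hFdef
  set g : S → ℝ := fun x => ∑ ℓ ∈ Finset.Icc 1 c.K, F x ℓ with hgdef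
  -- (A) if lev x < ℓ and 1 ≤ ℓ then F x ℓ = 0
  have hA : ∀ x ℓ, 1 ≤ ℓ → c.lev x < ℓ → F x ℓ = 0 := by
    intro x ℓ h1 h2
    apply Finset.sum_eq_zero
    intro y hy
    have hy' : c.lev y = ℓ := (Finset.mem_filter.mp hy).2
    rw [hhlt x y (by omega) (by omega), zero_mul]
  -- (B) F x (lev x) = mbar x when 1 ≤ lev x
  have hB : ∀ x, 1 ≤ c.lev x → F x (c.lev x) = mbar x := by
    intro x h1
    have hxmem : x ∈ c.level (c.lev x) := by
      simp [LevelChain.level]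
    rw [show F x (c.lev x) = ∑ y ∈ c.level (c.lev x), h x y * mbar y from rfl,
      Finset.sum_eq_single x]
    · rw [hh1 x h1, one_mul]
    · intro y hy hne
      have hy' : c.lev y = c.lev x := (Finset.mem_filter.mp hy).2
      rw [hhsame x y (by omega) hy'.symm (by exact fun e => hne (e.symm)), zero_mul]
    · intro hx; exact absurd hxmem hx
  -- (C) recurrence for F below the current level
  have hC : ∀ x ℓ, 1 ≤ ℓ → ℓ < c.lev x → F x ℓ = ∑ z, c.p x z * F z ℓ := by
    intro x ℓ h1 h2
    have key : ∀ y ∈ c.level ℓ, h x y = ∑ z, c.p x z * h z y := by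
      intro y hy
      have hy' : c.lev y = ℓ := (Finset.mem_filter.mp hy).2
      rw [hhrec x y (by omega) (by omega), hy']
      apply Finset.sum_subset (Finset.subset_univ _)
      intro z _ hz
      simp only [LevelChain.levels, Finset.mem_filter, Finset.mem_univ, true_and,
        not_and, not_le] at hz
      by_cases hzl : ℓ ≤ c.lev z
      · rw [c.elitist x z (hz hzl), zero_mul]
      · push_neg at hzl
        rw [hhlt z y (by omega) (by omega), mul_zero]
    calc F x ℓ = ∑ y ∈ c.level ℓ, (∑ z, c.p x z * h z y) * mbar y :=
          Finset.sum_congr rfl (fun y hy => by rw [key y hy])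
      _ = ∑ y ∈ c.level ℓ, ∑ z, c.p x z * (h z y * mbar y) := by
          simp [Finset.sum_mul, mul_assoc]
      _ = ∑ z, ∑ y ∈ c.level ℓ, c.p x z * (h z y * mbar y) := Finset.sum_comm
      _ = ∑ z, c.p x z * F z ℓ := by
          refine Finset.sum_congr rfl fun z _ => ?_
          rw [Finset.mul_sum]
  -- g vanishes on the optimal level
  have hg0 : ∀ x, c.lev x = 0 → g x = 0 := by
    intro x hx
    apply Finset.sum_eq_zero
    intro ℓ hℓ
    have := (Finset.mem_Icc.mp hℓ).1
    exact hA x ℓ this (by omega)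
  -- g satisfies the mean-hitting-time recurrence
  have hgrec : ∀ x, c.lev x ≠ 0 → g x = 1 + ∑ y, c.p x y * g y := by
    intro x hx
    have hk1 : 1 ≤ c.lev x := Nat.one_le_iff_ne_zero.mpr hx
    have hkK : c.lev x ≤ c.K := c.lev_le x
    have hterm : ∀ ℓ ∈ Finset.Icc 1 c.K,
        F x ℓ = (if ℓ = c.lev x then (1:ℝ) else 0) + ∑ y, c.p x y * F y ℓ := by
      intro ℓ hℓ
      obtain ⟨hℓ1, hℓK⟩ := Finset.mem_Icc.mp hℓ
      rcases lt_trichotomy ℓ (c.lev x) with hlt | heq | hgt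
      · rw [if_neg (by omega), hC x ℓ hℓ1 hlt, zero_add]
      · rw [if_pos heq, heq, hB x hk1, hmbrec x hx]
        congr 1
        rw [← Finset.sum_subset (Finset.subset_univ (c.level (c.lev x))) ?_]
        · refine Finset.sum_congr rfl fun y hy => ?_
          have hy' : c.lev y = c.lev x := (Finset.mem_filter.mp hy).2
          rw [← hy', hB y (by omega)]
        · intro y _ hy
          have hy' : c.lev y ≠ c.lev x := by
            intro e; exact hy (by simp [LevelChain.level, e])
          by_cases h' : c.lev y < c.lev x
          · rw [hA y (c.lev x) hk1 h', mul_zero]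
          · rw [c.elitist x y (by omega), zero_mul]
      · rw [if_neg (by omega), hA x ℓ hℓ1 hgt, zero_add]
        symm
        apply Finset.sum_eq_zero
        intro y _
        by_cases h' : c.lev y ≤ c.lev x
        · rw [hA y ℓ hℓ1 (by omega), mul_zero]
        · rw [c.elitist x y (by omega), zero_mul]
    calc g x = ∑ ℓ ∈ Finset.Icc 1 c.K,
          ((if ℓ = c.lev x then (1:ℝ) else 0) + ∑ y, c.p x y * F y ℓ) :=
        Finset.sum_congr rfl hterm
      _ = (∑ ℓ ∈ Finset.Icc 1 c.K, if ℓ = c.lev x then (1:ℝ) else 0)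
          + ∑ ℓ ∈ Finset.Icc 1 c.K, ∑ y, c.p x y * F y ℓ := Finset.sum_add_distrib
      _ = 1 + ∑ y, c.p x y * g y := by
          rw [Finset.sum_ite_eq' (Finset.Icc 1 c.K) (c.lev x) (fun _ => (1:ℝ)),
            if_pos (Finset.mem_Icc.mpr ⟨hk1, hkK⟩), Finset.sum_comm]
          congr 1
          refine Finset.sum_congr rfl fun y _ => ?_
          rw [hgdef, Finset.mul_sum]
  -- the difference v = m - g
  set v : S → ℝ := fun x => m x - g x with hvdef
  have hv0 : ∀ x, c.lev x = 0 → v x = 0 := by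
    intro x hx; simp [hvdef, hm0 x hx, hg0 x hx]
  have hvrec : ∀ x, c.lev x ≠ 0 → v x = ∑ y, c.p x y * v y := by
    intro x hx
    simp only [hvdef, hmrec x hx, hgrec x hx, mul_sub, Finset.sum_sub_distrib]
    ring
  -- v vanishes everywhere, by strong induction on levels
  have main : ∀ k : ℕ, ∀ x, c.lev x = k → v x = 0 := by
    intro k
    induction k using Nat.strong_induction_on with
    | _ k IH =>
      intro x hx
      rcases Nat.eq_zero_or_pos k with h0 | hpos
      · exact hv0 x (by omega)
      have hxK : k ≤ c.K := hx ▸ c.lev_le x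
      have hred : ∀ z, c.lev z = k → v z = ∑ y ∈ c.level k, c.p z y * v y := by
        intro z hz
        rw [hvrec z (by omega)]
        symm
        apply Finset.sum_subset (Finset.subset_univ _)
        intro y _ hy
        have hy' : c.lev y ≠ k := by
          intro e; exact hy (by simp [LevelChain.level, e])
        by_cases h' : c.lev y < k
        · rw [IH (c.lev y) (by omega) y rfl, mul_zero]
        · rw [c.elitist z y (by omega), zero_mul]
      have hxmem : x ∈ c.level k := by simp [LevelChain.level, hx]
      obtain ⟨x0, hx0mem, hx0max⟩ :=
        Finset.exists_max_image (c.level k) (fun z => |v z|) ⟨x, hxmem⟩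
      have hx0lev : c.lev x0 = k := (Finset.mem_filter.mp hx0mem).2
      have hbound : |v x0| ≤ (∑ y ∈ c.level k, c.p x0 y) * |v x0| := by
        calc |v x0| = |∑ y ∈ c.level k, c.p x0 y * v y| := by rw [hred x0 hx0lev]
          _ ≤ ∑ y ∈ c.level k, |c.p x0 y * v y| := Finset.abs_sum_le_sum_abs _ _
          _ ≤ ∑ y ∈ c.level k, c.p x0 y * |v x0| := by
              refine Finset.sum_le_sum fun y hy => ?_
              rw [abs_mul, abs_of_nonneg (c.p_nonneg _ _)]
              exact mul_le_mul_of_nonneg_left (hx0max y hy) (c.p_nonneg _ _)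
          _ = (∑ y ∈ c.level k, c.p x0 y) * |v x0| := (Finset.sum_mul _ _ _).symm
      have hlt1 : ∑ y ∈ c.level k, c.p x0 y < 1 := by
        have hr := hreach k hpos hxK x0 hx0lev
        have hdisj : Disjoint (c.level k) (c.levels 0 (k - 1)) := by
          rw [Finset.disjoint_left]
          intro a ha ha'
          have h1 : c.lev a = k := (Finset.mem_filter.mp ha).2
          have h2 := (Finset.mem_filter.mp ha').2
          omega
        have hsum : ∑ y ∈ c.level k, c.p x0 y + c.pSet x0 (c.levels 0 (k-1)) ≤ 1 := by
          rw [← c.p_row_sum x0, LevelChain.pSet, ← Finset.sum_union hdisj]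
          exact Finset.sum_le_sum_of_subset_of_nonneg (Finset.subset_univ _)
            (fun y _ _ => c.p_nonneg _ _)
        linarith
      have hzero : |v x0| = 0 := by
        nlinarith [abs_nonneg (v x0)]
      have : |v x| ≤ 0 := by
        have := hx0max x hxmem
        simpa [hzero] using this
      exact abs_eq_zero.mp (le_antisymm this (abs_nonneg _))
  intro k hk1 hkK x hx
  have hmx : m x = g x := by
    have := main k x hx
    simp only [hvdef] at this
    linarith
  rw [hmx, hgdef]
  symm
  apply Finset.sum_subset
  · intro ℓ hℓ
    have := Finset.mem_Icc.mp hℓ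
    exact Finset.mem_Icc.mpr ⟨this.1, by omega⟩
  · intro ℓ hℓ hℓ'
    have h1 := Finset.mem_Icc.mp hℓ
    have h2 : ¬ (1 ≤ ℓ ∧ ℓ ≤ k) := fun hc => hℓ' (Finset.mem_Icc.mpr hc)
    exact hA x ℓ h1.1 (by omega)
end

section
/- For every 1 ≤ k ≤ K and every x ∈ S_k, the mean hitting time of the optimal level is lower-bounded by m(x) ≥ Σ_{ℓ=1}^{k} h_min(X_k,S_ℓ) / p_max(X_ℓ, S_{[0,ℓ−1]}), where p_max(X_ℓ, S_{[0,ℓ−1]}) = max_{x∈S_ℓ} p(x, S_{[0,ℓ−1]}). -/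
open Finset

variable {S : Type*} [Fintype S]

/-- `p_max(X_ℓ, S_{[0,ℓ−1]})`. -/
noncomputable def Qmax (c : LevelChain S) (ℓ : ℕ) : ℝ :=
  sSup ((fun z => c.pSet z (c.levels 0 (ℓ - 1))) '' {z | c.lev z = ℓ})

lemma pSet_le_Qmax (c : LevelChain S) (ℓ : ℕ) (z : S) (hz : c.lev z = ℓ) :
    c.pSet z (c.levels 0 (ℓ - 1)) ≤ Qmax c ℓ :=
  le_csSup (Set.Finite.bddAbove (Set.Finite.image _ (Set.toFinite _))) ⟨z, hz, rfl⟩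

lemma Qmax_pos (c : LevelChain S) (hreach : c.Reachable) (ℓ : ℕ)
    (h1 : 1 ≤ ℓ) (h2 : ℓ ≤ c.K) : 0 < Qmax c ℓ := by
  obtain ⟨z, hz⟩ := c.level_nonempty ℓ h2
  exact lt_of_lt_of_le (hreach ℓ h1 h2 z hz) (pSet_le_Qmax c ℓ z hz)

lemma hit_univ (c : LevelChain S) (h : ℕ → S → ℝ) (hh : c.IsHitProb h)
    (x : S) (ℓ : ℕ) (hℓ : ℓ < c.lev x) :
    h ℓ x = ∑ y, c.p x y * h ℓ y := by
  rw [hh.2.2.2 ℓ x hℓ]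
  refine Finset.sum_subset (Finset.subset_univ _) ?_
  intro y _ hy
  simp only [LevelChain.levels, Finset.mem_filter, Finset.mem_univ, true_and, not_and,
    not_le] at hy
  by_cases h1 : ℓ ≤ c.lev y
  · rw [c.elitist x y (hy h1), zero_mul]
  · rw [hh.2.2.1 ℓ y (by omega), mul_zero]

lemma pSet_split (c : LevelChain S) (x : S) (k : ℕ) (hk : 1 ≤ k) (hx : c.lev x = k) :
    c.pSet x (c.levels 0 (k - 1)) + c.pSet x (c.level k) = 1 := by
  classical
  have hdisj : Disjoint (c.levels 0 (k - 1)) (c.level k) := by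
    rw [Finset.disjoint_left]
    intro y hy1 hy2
    simp only [LevelChain.levels, LevelChain.level, Finset.mem_filter, Finset.mem_univ,
      true_and] at hy1 hy2
    omega
  rw [LevelChain.pSet, LevelChain.pSet, ← Finset.sum_union hdisj, ← c.p_row_sum x]
  refine Finset.sum_subset (Finset.subset_univ _) ?_
  intro y _ hy
  simp only [Finset.mem_union, LevelChain.levels, LevelChain.level, Finset.mem_filter,
    Finset.mem_univ, true_and, not_or, not_and, not_le] at hy
  exact c.elitist x y (by omega)

lemma key_lemma (c : LevelChain S) (hreach : c.Reachable)
    (m : S → ℝ) (h : ℕ → S → ℝ)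
    (hm : c.IsMeanHittingTime m) (hh : c.IsHitProb h) :
    ∀ k, ∀ x, c.lev x = k → m x ≥ ∑ ℓ ∈ Finset.Icc 1 k, h ℓ x / Qmax c ℓ := by
  classical
  intro k
  induction k using Nat.strong_induction_on with
  | _ k IH =>
  intro x hx
  rcases Nat.eq_zero_or_pos k with hk0 | hk1
  · subst hk0
    rw [hm.2.1 x hx]
    simp
  have hkK : k ≤ c.K := hx ▸ c.lev_le x
  -- the "g" function and the auxiliary bound for lower levels
  set g : S → ℝ := fun y => ∑ ℓ ∈ Finset.Icc 1 (k - 1), h ℓ y / Qmax c ℓ with hg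
  have aux : ∀ y, c.lev y < k → g y ≤ m y := by
    intro y hy
    have h1 := IH (c.lev y) hy y rfl
    have heq : g y = ∑ ℓ ∈ Finset.Icc 1 (c.lev y), h ℓ y / Qmax c ℓ := by
      rw [hg]
      refine (Finset.sum_subset (Finset.Icc_subset_Icc_right (by omega)) ?_).symm
      intro ℓ hℓ hℓ'
      simp only [Finset.mem_Icc] at hℓ hℓ'
      rw [hh.2.2.1 ℓ y (by omega), zero_div]
    rw [heq]
    exact h1
  -- g satisfies the same linear recursion on level k
  have hswap : ∀ z, c.lev z = k → g z = ∑ y, c.p z y * g y := by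
    intro z hz
    calc g z = ∑ ℓ ∈ Finset.Icc 1 (k - 1), (∑ y, c.p z y * h ℓ y) / Qmax c ℓ := by
          refine Finset.sum_congr rfl fun ℓ hℓ => ?_
          simp only [Finset.mem_Icc] at hℓ
          rw [← hit_univ c h hh z ℓ (by omega)]
      _ = ∑ ℓ ∈ Finset.Icc 1 (k - 1), ∑ y, c.p z y * (h ℓ y / Qmax c ℓ) := by
          refine Finset.sum_congr rfl fun ℓ _ => ?_
          rw [Finset.sum_div]
          exact Finset.sum_congr rfl fun y _ => (mul_div_assoc _ _ _)
      _ = ∑ y, ∑ ℓ ∈ Finset.Icc 1 (k - 1), c.p z y * (h ℓ y / Qmax c ℓ) :=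
          Finset.sum_comm
      _ = ∑ y, c.p z y * g y := by
          refine Finset.sum_congr rfl fun y _ => ?_
          rw [hg, Finset.mul_sum]
  have hDrec : ∀ z, c.lev z = k → m z - g z = 1 + ∑ y, c.p z y * (m y - g y) := by
    intro z hz
    have h1 : m z = 1 + ∑ y, c.p z y * m y := hm.2.2 z (by omega)
    have h2 := hswap z hz
    rw [h1, h2]
    simp only [mul_sub, Finset.sum_sub_distrib]
    ring
  -- minimizer over level k
  have hxmem : x ∈ c.level k := by
    simp [LevelChain.level, hx]
  obtain ⟨w, hwmem, hwmin⟩ :=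
    Finset.exists_min_image (c.level k) (fun y => m y - g y) ⟨x, hxmem⟩
  have hwlev : c.lev w = k := by
    simpa [LevelChain.level] using hwmem
  have hwbound : 1 / Qmax c k ≤ m w - g w := by
    have hrec := hDrec w hwlev
    have hsplit : ∑ y, c.p w y * (m y - g y)
        = ∑ y ∈ c.level k, c.p w y * (m y - g y)
          + ∑ y ∈ (c.level k)ᶜ, c.p w y * (m y - g y) :=
      (Finset.sum_add_sum_compl _ _).symm
    have hrest : 0 ≤ ∑ y ∈ (c.level k)ᶜ, c.p w y * (m y - g y) := by
      refine Finset.sum_nonneg fun y hy => ?_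
      simp only [Finset.mem_compl, LevelChain.level, Finset.mem_filter, Finset.mem_univ,
        true_and] at hy
      rcases lt_or_gt_of_ne hy with h1 | h1
      · exact mul_nonneg (c.p_nonneg w y) (by linarith [aux y h1])
      · rw [c.elitist w y (by omega)]
        simp
    have hlev : ∑ y ∈ c.level k, c.p w y * (m w - g w)
        ≤ ∑ y ∈ c.level k, c.p w y * (m y - g y) := by
      refine Finset.sum_le_sum fun y hy => ?_
      exact mul_le_mul_of_nonneg_left (hwmin y hy) (c.p_nonneg w y)
    have hPsum : ∑ y ∈ c.level k, c.p w y * (m w - g w)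
        = c.pSet w (c.level k) * (m w - g w) := by
      rw [LevelChain.pSet, Finset.sum_mul]
    have hineq : 1 + c.pSet w (c.level k) * (m w - g w) ≤ m w - g w := by
      rw [← hPsum]
      calc 1 + ∑ y ∈ c.level k, c.p w y * (m w - g w)
          ≤ 1 + (∑ y ∈ c.level k, c.p w y * (m y - g y)
              + ∑ y ∈ (c.level k)ᶜ, c.p w y * (m y - g y)) := by linarith
        _ = m w - g w := by rw [← hsplit, ← hrec]
    set α := c.pSet w (c.levels 0 (k - 1)) with hα
    have hαpos : 0 < α := hreach k hk1 hkK w hwlev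
    have hα1 : α + c.pSet w (c.level k) = 1 := pSet_split c w k hk1 hwlev
    have hαD : 1 ≤ α * (m w - g w) := by nlinarith
    have hαQ : α ≤ Qmax c k := pSet_le_Qmax c k w hwlev
    have hQpos : 0 < Qmax c k := Qmax_pos c hreach k hk1 hkK
    have h1 : 1 / α ≤ m w - g w := by
      rw [div_le_iff₀ hαpos]
      linarith [mul_comm α (m w - g w)]
    calc 1 / Qmax c k ≤ 1 / α := one_div_le_one_div_of_le hαpos hαQ
      _ ≤ m w - g w := h1
  -- conclude for x
  have hxD : 1 / Qmax c k ≤ m x - g x := le_trans hwbound (hwmin x hxmem)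
  have hsum : ∑ ℓ ∈ Finset.Icc 1 k, h ℓ x / Qmax c ℓ = g x + 1 / Qmax c k := by
    obtain ⟨n, rfl⟩ : ∃ n, k = n + 1 := ⟨k - 1, by omega⟩
    rw [Finset.sum_Icc_succ_top (by omega), hh.2.1 (n + 1) x hx]
    simp [hg]
  rw [ge_iff_le, hsum]
  linarith

/-- For every `1 ≤ k ≤ K` and every `x ∈ S_k`, the mean hitting time
of the optimal level is lower-bounded by
`m(x) ≥ Σ_{ℓ=1}^{k} h_min(X_k,S_ℓ) / p_max(X_ℓ, S_{[0,ℓ−1]})`. -/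
theorem meanHittingTime_lower_bound
    (c : LevelChain S) (hreach : c.Reachable)
    (m : S → ℝ) (h : ℕ → S → ℝ)
    (hm : c.IsMeanHittingTime m) (hh : c.IsHitProb h) :
    ∀ k, 1 ≤ k → k ≤ c.K → ∀ x, c.lev x = k →
      m x ≥ ∑ ℓ ∈ Finset.Icc 1 k,
        sInf (h ℓ '' {z | c.lev z = k}) /
          sSup ((fun z => c.pSet z (c.levels 0 (ℓ - 1))) '' {z | c.lev z = ℓ}) := by
  intro k hk1 hkK x hx
  have hkey := key_lemma c hreach m h hm hh k x hx
  refine le_trans (Finset.sum_le_sum fun ℓ hℓ => ?_) hkey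
  simp only [Finset.mem_Icc] at hℓ
  have hQpos : 0 < Qmax c ℓ := Qmax_pos c hreach ℓ hℓ.1 (le_trans hℓ.2 hkK)
  have hinf : sInf (h ℓ '' {z | c.lev z = k}) ≤ h ℓ x :=
    csInf_le (Set.Finite.bddBelow (Set.Finite.image _ (Set.toFinite _))) ⟨x, hx, rfl⟩
  have hfin : sInf (h ℓ '' {z | c.lev z = k}) / Qmax c ℓ ≤ h ℓ x / Qmax c ℓ := by
    gcongr
  exact hfin
end

section
/- For every 1 ≤ k ≤ K and every x ∈ S_k, the mean hitting time of the optimal level is upper-bounded by m(x) ≤ Σ_{ℓ=1}^{k} h_max(X_k,S_ℓ) / p_min(X_ℓ, S_{[0,ℓ−1]}), where p_min(X_ℓ, S_{[0,ℓ−1]}) = min_{x∈S_ℓ} p(x, S_{[0,ℓ−1]}) (which is positive by assumption). -/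
open Finset

variable {S : Type*} [Fintype S]

namespace MHTAux

/-- `p_min(X_ℓ, S_{[0,ℓ−1]})`. -/
noncomputable def pmin (c : LevelChain S) (ℓ : ℕ) : ℝ :=
  sInf ((fun z => c.pSet z (c.levels 0 (ℓ - 1))) '' {z | c.lev z = ℓ})

lemma pmin_le (c : LevelChain S) {ℓ : ℕ} {x : S} (hx : c.lev x = ℓ) :
    pmin c ℓ ≤ c.pSet x (c.levels 0 (ℓ - 1)) :=
  csInf_le (Set.Finite.bddBelow (Set.toFinite _)) ⟨x, hx, rfl⟩

lemma pmin_pos (c : LevelChain S) (hreach : c.Reachable) {ℓ : ℕ}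
    (h1 : 1 ≤ ℓ) (h2 : ℓ ≤ c.K) : 0 < pmin c ℓ := by
  obtain ⟨x, hx⟩ := c.level_nonempty ℓ h2
  have hne : ((fun z => c.pSet z (c.levels 0 (ℓ - 1))) '' {z | c.lev z = ℓ}).Nonempty :=
    ⟨_, ⟨x, hx, rfl⟩⟩
  obtain ⟨z, hz, hzeq⟩ := hne.csInf_mem (Set.toFinite _)
  rw [pmin, ← hzeq]
  exact hreach ℓ h1 h2 z hz

lemma sum_p_h (c : LevelChain S) {h : ℕ → S → ℝ} (hh : c.IsHitProb h)
    {x : S} {ℓ : ℕ} (hne : ℓ ≠ c.lev x) :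
    ∑ y, c.p x y * h ℓ y = h ℓ x := by
  obtain ⟨hbd, hone, hzero, hrec⟩ := hh
  rcases lt_or_gt_of_ne hne with hlt | hgt
  · rw [hrec ℓ x hlt]
    symm
    apply Finset.sum_subset (Finset.subset_univ _)
    intro y _ hy
    simp only [LevelChain.levels, Finset.mem_filter, Finset.mem_univ, true_and] at hy
    push_neg at hy
    rcases lt_or_ge (c.lev y) ℓ with h1 | h1
    · rw [hzero ℓ y h1, mul_zero]
    · have := hy h1
      rw [c.elitist x y (by omega), zero_mul]
  · rw [hzero ℓ x hgt]
    apply Finset.sum_eq_zero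
    intro y _
    rcases lt_or_ge (c.lev y) ℓ with h1 | h1
    · rw [hzero ℓ y h1, mul_zero]
    · rw [c.elitist x y (by omega), zero_mul]

lemma sum_p_h_self (c : LevelChain S) {h : ℕ → S → ℝ} (hh : c.IsHitProb h) (x : S) :
    ∑ y, c.p x y * h (c.lev x) y = c.pSet x (c.level (c.lev x)) := by
  obtain ⟨hbd, hone, hzero, hrec⟩ := hh
  rw [LevelChain.pSet]
  rw [show (∑ y, c.p x y * h (c.lev x) y)
      = ∑ y ∈ c.level (c.lev x), c.p x y * h (c.lev x) y from
    (Finset.sum_subset (Finset.subset_univ _) ?_).symm]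
  · apply Finset.sum_congr rfl
    intro y hy
    simp only [LevelChain.level, Finset.mem_filter, Finset.mem_univ, true_and] at hy
    rw [hone _ y hy, mul_one]
  · intro y _ hy
    simp only [LevelChain.level, Finset.mem_filter, Finset.mem_univ, true_and] at hy
    rcases lt_or_gt_of_ne hy with h1 | h1
    · rw [hzero _ y h1, mul_zero]
    · rw [c.elitist x y h1, zero_mul]

lemma one_sub_pSet_level (c : LevelChain S) {x : S} (hx : c.lev x ≠ 0) :
    1 - c.pSet x (c.level (c.lev x)) = c.pSet x (c.levels 0 (c.lev x - 1)) := by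
  classical
  have hdisj : Disjoint (c.levels 0 (c.lev x - 1)) (c.level (c.lev x)) := by
    rw [Finset.disjoint_left]
    intro y hy1 hy2
    simp only [LevelChain.levels, LevelChain.level, Finset.mem_filter, Finset.mem_univ,
      true_and] at hy1 hy2
    omega
  have hone : c.pSet x (c.levels 0 (c.lev x - 1)) + c.pSet x (c.level (c.lev x)) = 1 := by
    rw [← c.p_row_sum x, LevelChain.pSet, LevelChain.pSet, ← Finset.sum_union hdisj]
    apply Finset.sum_subset (Finset.subset_univ _)
    intro y _ hy
    simp only [Finset.mem_union, LevelChain.levels, LevelChain.level, Finset.mem_filter,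
      Finset.mem_univ, true_and] at hy
    push_neg at hy
    exact c.elitist x y (by omega)
  linarith

/-- The comparison function. -/
noncomputable def g (c : LevelChain S) (h : ℕ → S → ℝ) (x : S) : ℝ :=
  ∑ ℓ ∈ Finset.Icc 1 c.K, (pmin c ℓ)⁻¹ * h ℓ x

lemma g_nonneg (c : LevelChain S) (hreach : c.Reachable)
    {h : ℕ → S → ℝ} (hh : c.IsHitProb h) (x : S) : 0 ≤ g c h x := by
  apply Finset.sum_nonneg
  intro ℓ hℓ
  simp only [Finset.mem_Icc] at hℓ
  exact mul_nonneg (inv_nonneg.mpr (pmin_pos c hreach hℓ.1 hℓ.2).le) (hh.1 ℓ x).1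

lemma g_superharmonic (c : LevelChain S) (hreach : c.Reachable)
    {h : ℕ → S → ℝ} (hh : c.IsHitProb h) {x : S} (hx : c.lev x ≠ 0) :
    1 + ∑ y, c.p x y * g c h y ≤ g c h x := by
  have hk1 : 1 ≤ c.lev x := Nat.one_le_iff_ne_zero.mpr hx
  have hkK : c.lev x ≤ c.K := c.lev_le x
  have hkmem : c.lev x ∈ Finset.Icc 1 c.K := Finset.mem_Icc.mpr ⟨hk1, hkK⟩
  have hswap : ∑ y, c.p x y * g c h y
      = ∑ ℓ ∈ Finset.Icc 1 c.K, (pmin c ℓ)⁻¹ * ∑ y, c.p x y * h ℓ y := by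
    simp only [g, Finset.mul_sum]
    rw [Finset.sum_comm]
    apply Finset.sum_congr rfl
    intro ℓ _
    apply Finset.sum_congr rfl
    intro y _
    ring
  have e1 : ∑ y, c.p x y * g c h y
      = (∑ ℓ ∈ (Finset.Icc 1 c.K).erase (c.lev x), (pmin c ℓ)⁻¹ * h ℓ x)
        + (pmin c (c.lev x))⁻¹ * c.pSet x (c.level (c.lev x)) := by
    rw [hswap, ← Finset.sum_erase_add _ _ hkmem]
    congr 1
    · apply Finset.sum_congr rfl
      intro ℓ hℓ
      rw [sum_p_h c hh (Finset.ne_of_mem_erase hℓ)]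
    · rw [sum_p_h_self c hh]
  have e2 : g c h x
      = (∑ ℓ ∈ (Finset.Icc 1 c.K).erase (c.lev x), (pmin c ℓ)⁻¹ * h ℓ x)
        + (pmin c (c.lev x))⁻¹ * 1 := by
    rw [g, ← Finset.sum_erase_add _ _ hkmem, hh.2.1 (c.lev x) x rfl]
  have e3 := one_sub_pSet_level c hx
  have hpm := pmin_pos c hreach hk1 hkK
  have hple := pmin_le c (x := x) rfl
  have key : 1 ≤ (pmin c (c.lev x))⁻¹ * (1 - c.pSet x (c.level (c.lev x))) := by
    rw [e3]
    calc (1 : ℝ) = (pmin c (c.lev x))⁻¹ * pmin c (c.lev x) := (inv_mul_cancel₀ hpm.ne').symm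
    _ ≤ _ := mul_le_mul_of_nonneg_left hple (inv_nonneg.mpr hpm.le)
  have expand : (pmin c (c.lev x))⁻¹ * (1 - c.pSet x (c.level (c.lev x)))
      = (pmin c (c.lev x))⁻¹ * 1 - (pmin c (c.lev x))⁻¹ * c.pSet x (c.level (c.lev x)) := by
    ring
  linarith

lemma m_le_g (c : LevelChain S) (hreach : c.Reachable)
    (m g : S → ℝ)
    (hm0 : ∀ x, c.lev x = 0 → m x = 0)
    (hmrec : ∀ x, c.lev x ≠ 0 → m x = 1 + ∑ y, c.p x y * m y)
    (hg0 : ∀ x, 0 ≤ g x)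
    (hgsup : ∀ x, c.lev x ≠ 0 → 1 + ∑ y, c.p x y * g y ≤ g x) :
    ∀ x, m x ≤ g x := by
  by_contra hcon
  push_neg at hcon
  have hneS : (Finset.univ : Finset S).Nonempty := by
    obtain ⟨x, _⟩ := hcon; exact ⟨x, Finset.mem_univ x⟩
  obtain ⟨x₀, -, hx₀⟩ := Finset.exists_max_image Finset.univ (fun x => m x - g x) hneS
  set M := m x₀ - g x₀ with hM
  have hMle : ∀ y, m y - g y ≤ M := fun y => hx₀ y (Finset.mem_univ y)
  have hMpos : 0 < M := by
    obtain ⟨x, hx⟩ := hcon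
    have := hMle x
    linarith
  have key : ∀ k, ∀ x, c.lev x = k → m x - g x ≠ M := by
    intro k
    induction k using Nat.strong_induction_on with
    | _ k ih =>
    intro x hx heq
    rcases Nat.eq_zero_or_pos k with rfl | hk1
    · have h1 := hm0 x hx
      have h2 := hg0 x
      linarith
    · have hxne : c.lev x ≠ 0 := by omega
      have hd : M ≤ ∑ y, c.p x y * (m y - g y) := by
        have h1 := hmrec x hxne
        have h2 := hgsup x hxne
        have h3 : ∑ y, c.p x y * (m y - g y)
            = (∑ y, c.p x y * m y) - ∑ y, c.p x y * g y := by
          rw [← Finset.sum_sub_distrib]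
          apply Finset.sum_congr rfl
          intros; ring
        linarith
      have hsM : ∑ y, c.p x y * M = M := by
        rw [← Finset.sum_mul, c.p_row_sum, one_mul]
      have hup : ∑ y, c.p x y * (m y - g y) ≤ M := by
        calc ∑ y, c.p x y * (m y - g y) ≤ ∑ y, c.p x y * M :=
              Finset.sum_le_sum fun y _ =>
                mul_le_mul_of_nonneg_left (hMle y) (c.p_nonneg x y)
        _ = M := hsM
      have hsum0 : ∑ y, c.p x y * (M - (m y - g y)) = 0 := by
        have h4 : ∑ y, c.p x y * (M - (m y - g y))
            = (∑ y, c.p x y * M) - ∑ y, c.p x y * (m y - g y) := by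
          rw [← Finset.sum_sub_distrib]
          apply Finset.sum_congr rfl
          intros; ring
        linarith
      have hterm : ∀ y, c.p x y * (M - (m y - g y)) = 0 := by
        intro y
        refine (Finset.sum_eq_zero_iff_of_nonneg ?_).mp hsum0 y (Finset.mem_univ y)
        intro z _
        exact mul_nonneg (c.p_nonneg x z) (by linarith [hMle z])
      have hkK : k ≤ c.K := by have := c.lev_le x; omega
      have hpos := hreach k hk1 hkK x hx
      rw [LevelChain.pSet] at hpos
      obtain ⟨y, hy, hpy⟩ : ∃ y ∈ c.levels 0 (k - 1), 0 < c.p x y := by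
        by_contra hb
        push_neg at hb
        have : ∑ y ∈ c.levels 0 (k - 1), c.p x y ≤ 0 :=
          Finset.sum_nonpos fun y hy => hb y hy
        linarith
      have hyM : m y - g y = M := by
        rcases mul_eq_zero.mp (hterm y) with h0 | h0
        · linarith
        · linarith
      simp only [LevelChain.levels, Finset.mem_filter, Finset.mem_univ, true_and] at hy
      exact ih (c.lev y) (by omega) y rfl hyM
  exact key (c.lev x₀) x₀ rfl hM.symm

end MHTAux

open MHTAux in
/-- For every `1 ≤ k ≤ K` and every `x ∈ S_k`, the mean hitting time
of the optimal level is upper-bounded by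
`m(x) ≤ Σ_{ℓ=1}^{k} h_max(X_k,S_ℓ) / p_min(X_ℓ, S_{[0,ℓ−1]})`. -/
theorem meanHittingTime_upper_bound
    (c : LevelChain S) (hreach : c.Reachable)
    (m : S → ℝ) (h : ℕ → S → ℝ)
    (hm : c.IsMeanHittingTime m) (hh : c.IsHitProb h) :
    ∀ k, 1 ≤ k → k ≤ c.K → ∀ x, c.lev x = k →
      m x ≤ ∑ ℓ ∈ Finset.Icc 1 k,
        sSup (h ℓ '' {z | c.lev z = k}) /
          sInf ((fun z => c.pSet z (c.levels 0 (ℓ - 1))) '' {z | c.lev z = ℓ}) := by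
  intro k hk1 hkK x hx
  obtain ⟨hmnn, hm0, hmrec⟩ := hm
  have hle := m_le_g c hreach m (g c h) hm0 hmrec
    (g_nonneg c hreach hh) (fun z hz => g_superharmonic c hreach hh hz) x
  refine hle.trans ?_
  have hrestrict : g c h x = ∑ ℓ ∈ Finset.Icc 1 k, (pmin c ℓ)⁻¹ * h ℓ x := by
    rw [g]
    symm
    apply Finset.sum_subset (Finset.Icc_subset_Icc le_rfl hkK)
    intro ℓ hℓ hℓ'
    simp only [Finset.mem_Icc] at hℓ hℓ'
    have hlt : k < ℓ := by omega
    rw [hh.2.2.1 ℓ x (by omega), mul_zero]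
  rw [hrestrict]
  apply Finset.sum_le_sum
  intro ℓ hℓ
  simp only [Finset.mem_Icc] at hℓ
  have hpm := pmin_pos c hreach hℓ.1 (le_trans hℓ.2 hkK)
  have hsup : h ℓ x ≤ sSup (h ℓ '' {z | c.lev z = k}) :=
    le_csSup (Set.Finite.bddAbove (Set.toFinite _)) ⟨x, hx, rfl⟩
  rw [show sInf ((fun z => c.pSet z (c.levels 0 (ℓ - 1))) '' {z | c.lev z = ℓ})
      = pmin c ℓ from rfl, inv_mul_eq_div]
  exact div_le_div_of_nonneg_right hsup hpm.le |>.trans_eq rfl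
end

section
/- Let 1 ≤ ℓ < k ≤ K and let coefficients c_{j,ℓ} ∈ [0,1] be given for ℓ ≤ j ≤ k with c_{ℓ,ℓ} = 1. If for every j with ℓ < j ≤ k one has c_{j,ℓ} ≤ min_{x∈S_j} ( r(x,S_ℓ) + Σ_{i=ℓ+1}^{j−1} r(x,S_i) · c_{i,ℓ} ), then c_{j,ℓ} ≤ h_min(X_j,S_ℓ) for every ℓ < j ≤ k. -/
open Finset

variable {S : Type*} [Fintype S]

lemma sum_levels (c : LevelChain S) (a b : ℕ) (f : S → ℝ) :
    ∑ y ∈ c.levels a b, f y = ∑ i ∈ Finset.Icc a b, ∑ y ∈ c.level i, f y := by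
  classical
  have hbu : c.levels a b = (Finset.Icc a b).biUnion c.level := by
    ext x
    simp [LevelChain.levels, LevelChain.level]
  rw [hbu, Finset.sum_biUnion]
  intro i hi j hj hij
  simp only [Finset.disjoint_left, LevelChain.level, Finset.mem_filter]
  rintro x ⟨-, h1⟩ ⟨-, h2⟩
  exact hij (h1.symm.trans h2)

/-- Lower-bound drift condition: if `c_{ℓ,ℓ} = 1` and for every
`ℓ < j ≤ k` the coefficient satisfies
`c_{j,ℓ} ≤ min_{x∈S_j}( r(x,S_ℓ) + Σ_{i=ℓ+1}^{j−1} r(x,S_i)·c_{i,ℓ} )`,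
then `c_{j,ℓ} ≤ h_min(X_j,S_ℓ)` for every `ℓ < j ≤ k`. -/
theorem lower_coefficients_le_hitProb
    (c : LevelChain S) (hreach : c.Reachable)
    (h : ℕ → S → ℝ) (hh : c.IsHitProb h)
    (ℓ k : ℕ) (hℓ : 1 ≤ ℓ) (hℓk : ℓ < k) (hk : k ≤ c.K)
    (cf : ℕ → ℝ)
    (hcf01 : ∀ j, ℓ ≤ j → j ≤ k → 0 ≤ cf j ∧ cf j ≤ 1)
    (hcfdiag : cf ℓ = 1)
    (hrec : ∀ j, ℓ < j → j ≤ k → ∀ x, c.lev x = j →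
      cf j ≤ c.r x ℓ + ∑ i ∈ Finset.Icc (ℓ + 1) (j - 1), c.r x i * cf i) :
    ∀ j, ℓ < j → j ≤ k → ∀ x, c.lev x = j → cf j ≤ h ℓ x := by
  classical
  intro j
  induction j using Nat.strong_induction_on with
  | _ j IH =>
  intro hℓj hjk x hx
  -- pick the minimizer z of h ℓ over level j
  have hjK : j ≤ c.K := hjk.trans hk
  obtain ⟨x₀, hx₀⟩ := c.level_nonempty j hjK
  have hx₀mem : x₀ ∈ c.level j := by simp [LevelChain.level, hx₀]
  obtain ⟨z, hzmem, hzmin⟩ := Finset.exists_min_image (c.level j) (h ℓ) ⟨x₀, hx₀mem⟩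
  have hzlev : c.lev z = j := by simpa [LevelChain.level] using hzmem
  suffices hz : cf j ≤ h ℓ z by
    exact hz.trans (hzmin x (by simp [LevelChain.level, hx]))
  set q : ℝ := c.pSet z (c.level j) with hq
  -- 1 - q > 0
  have h1q : 0 < 1 - q := by
    have hreachz := hreach j (hℓ.trans hℓj.le) hjK z hzlev
    have hdisj : Disjoint (c.level j) (c.levels 0 (j - 1)) := by
      simp only [Finset.disjoint_left, LevelChain.level, LevelChain.levels,
        Finset.mem_filter]
      rintro y ⟨-, h1⟩ ⟨-, -, h2⟩
      omega
    have hle : q + c.pSet z (c.levels 0 (j - 1)) ≤ 1 := by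
      have : q + c.pSet z (c.levels 0 (j - 1))
          = ∑ y ∈ (c.level j) ∪ (c.levels 0 (j - 1)), c.p z y := by
        rw [Finset.sum_union hdisj]; rfl
      rw [this, ← c.p_row_sum z]
      exact Finset.sum_le_sum_of_subset_of_nonneg (Finset.subset_univ _)
        (fun y _ _ => c.p_nonneg z y)
    linarith
  -- lower-bound function
  set lb : S → ℝ := fun y => if c.lev y = j then h ℓ z else cf (c.lev y) with hlb
  have hkey : ∑ y ∈ c.levels ℓ j, c.p z y * lb y ≤ h ℓ z := by
    rw [(hh.2.2.2 ℓ z (hzlev ▸ hℓj)), hzlev]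
    apply Finset.sum_le_sum
    intro y hy
    have hy' : ℓ ≤ c.lev y ∧ c.lev y ≤ j := by
      simpa [LevelChain.levels] using hy
    apply mul_le_mul_of_nonneg_left _ (c.p_nonneg z y)
    by_cases hyj : c.lev y = j
    · simp only [hlb, hyj, if_pos rfl]
      exact hzmin y (by simp [LevelChain.level, hyj])
    · simp only [hlb, if_neg hyj]
      rcases eq_or_lt_of_le hy'.1 with hyl | hyl
      · rw [← hyl, hcfdiag]
        exact le_of_eq (hh.2.1 ℓ y hyl.symm).symm
      · exact IH (c.lev y) (lt_of_le_of_ne hy'.2 hyj) hyl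
          (hy'.2.trans hjk) y rfl
  -- compute the sum
  set P : ℝ := c.pSet z (c.level ℓ)
      + ∑ i ∈ Finset.Icc (ℓ + 1) (j - 1), c.pSet z (c.level i) * cf i with hP
  have hsum : ∑ y ∈ c.levels ℓ j, c.p z y * lb y = q * h ℓ z + P := by
    rw [sum_levels]
    have hfib : ∀ i, ∑ y ∈ c.level i, c.p z y * lb y
        = c.pSet z (c.level i) * (if i = j then h ℓ z else cf i) := by
      intro i
      rw [LevelChain.pSet, Finset.sum_mul]
      apply Finset.sum_congr rfl
      intro y hy
      have : c.lev y = i := by simpa [LevelChain.level] using hy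
      simp [hlb, this]
    simp only [hfib]
    have hsplit : Finset.Icc ℓ j = insert j (insert ℓ (Finset.Icc (ℓ + 1) (j - 1))) := by
      ext i
      simp only [Finset.mem_Icc, Finset.mem_insert]
      omega
    have hnot1 : j ∉ insert ℓ (Finset.Icc (ℓ + 1) (j - 1)) := by
      simp only [Finset.mem_insert, Finset.mem_Icc]; omega
    have hnot2 : ℓ ∉ Finset.Icc (ℓ + 1) (j - 1) := by
      simp only [Finset.mem_Icc]; omega
    rw [hsplit, Finset.sum_insert hnot1, Finset.sum_insert hnot2]
    have h1 : ∀ i ∈ Finset.Icc (ℓ + 1) (j - 1), ¬ (i = j) := by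
      intro i hi
      simp only [Finset.mem_Icc] at hi
      omega
    rw [if_pos rfl, if_neg (by omega : ¬ ℓ = j), hcfdiag, mul_one]
    rw [Finset.sum_congr rfl (fun i hi => by rw [if_neg (h1 i hi)])]
  have hmain : P ≤ (1 - q) * h ℓ z := by nlinarith [hkey, hsum]
  -- rewrite the recursion bound
  have hrz := hrec j hℓj hjk z hzlev
  have hrℓ : c.r z ℓ = c.pSet z (c.level ℓ) / (1 - q) := by
    rw [LevelChain.r, if_neg (by omega : ¬ ℓ = c.lev z), hzlev]
  have hri : ∀ i ∈ Finset.Icc (ℓ + 1) (j - 1),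
      c.r z i * cf i = c.pSet z (c.level i) * cf i / (1 - q) := by
    intro i hi
    simp only [Finset.mem_Icc] at hi
    rw [LevelChain.r, if_neg (by omega : ¬ i = c.lev z), hzlev]
    ring
  rw [hrℓ, Finset.sum_congr rfl hri, ← Finset.sum_div, ← add_div, ← hP] at hrz
  calc cf j ≤ P / (1 - q) := hrz
    _ ≤ h ℓ z := by rw [div_le_iff₀ h1q]; linarith [hmain]
end

section
/- Let 1 ≤ ℓ < k ≤ K and let coefficients c_{j,ℓ} ∈ [0,1] be given for ℓ ≤ j ≤ k with c_{ℓ,ℓ} = 1. If for every j with ℓ < j ≤ k one has c_{j,ℓ} ≥ max_{x∈S_j} ( r(x,S_ℓ) + Σ_{i=ℓ+1}^{j−1} r(x,S_i) · c_{i,ℓ} ), then c_{j,ℓ} ≥ h_max(X_j,S_ℓ) for every ℓ < j ≤ k. -/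
open Finset

variable {S : Type*} [Fintype S]

lemma LevelChain.levels_split [DecidableEq S] (c : LevelChain S) (a j : ℕ) (haj : a ≤ j) (hj : 1 ≤ j) :
    c.levels a j = c.levels a (j - 1) ∪ c.level j := by
  ext x
  simp only [LevelChain.levels, LevelChain.level, Finset.mem_union, Finset.mem_filter,
    Finset.mem_univ, true_and]
  omega

lemma LevelChain.levels_disj (c : LevelChain S) (a j : ℕ) (hj : 1 ≤ j) :
    Disjoint (c.levels a (j - 1)) (c.level j) := by
  rw [Finset.disjoint_left]
  intro x hx hx'
  simp only [LevelChain.levels, LevelChain.level, Finset.mem_filter, Finset.mem_univ,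
    true_and] at hx hx'
  omega

lemma LevelChain.levels_biUnion [DecidableEq S] (c : LevelChain S) (a j : ℕ) :
    c.levels a j = (Finset.Icc a j).biUnion c.level := by
  ext x
  simp only [LevelChain.levels, LevelChain.level, Finset.mem_biUnion, Finset.mem_Icc,
    Finset.mem_filter, Finset.mem_univ, true_and]
  constructor
  · intro hx; exact ⟨c.lev x, hx, rfl⟩
  · rintro ⟨i, hi, rfl⟩; exact hi

lemma LevelChain.level_pairwise_disj (c : LevelChain S) (t : Finset ℕ) :
    (t : Set ℕ).PairwiseDisjoint c.level := by
  intro a _ b _ hab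
  rw [Function.onFun, Finset.disjoint_left]
  intro x hx hx'
  simp only [LevelChain.level, Finset.mem_filter, Finset.mem_univ, true_and] at hx hx'
  omega

lemma LevelChain.pSet_levels_eq_one (c : LevelChain S) (x : S) (j : ℕ) (hx : c.lev x = j) :
    c.pSet x (c.levels 0 j) = 1 := by
  rw [LevelChain.pSet, ← c.p_row_sum x]
  apply Finset.sum_subset (Finset.subset_univ _)
  intro y _ hy
  simp only [LevelChain.levels, Finset.mem_filter, Finset.mem_univ, true_and,
    Nat.zero_le, not_and, not_le] at hy
  exact c.elitist x y (by omega)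

/-- Upper-bound drift condition: if `c_{ℓ,ℓ} = 1` and for every
`ℓ < j ≤ k` the coefficient satisfies
`c_{j,ℓ} ≥ max_{x∈S_j}( r(x,S_ℓ) + Σ_{i=ℓ+1}^{j−1} r(x,S_i)·c_{i,ℓ} )`,
then `c_{j,ℓ} ≥ h_max(X_j,S_ℓ)` for every `ℓ < j ≤ k`. -/
theorem upper_coefficients_ge_hitProb
    (c : LevelChain S) (hreach : c.Reachable)
    (h : ℕ → S → ℝ) (hh : c.IsHitProb h)
    (ℓ k : ℕ) (hℓ : 1 ≤ ℓ) (hℓk : ℓ < k) (hk : k ≤ c.K)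
    (cf : ℕ → ℝ)
    (hcf01 : ∀ j, ℓ ≤ j → j ≤ k → 0 ≤ cf j ∧ cf j ≤ 1)
    (hcfdiag : cf ℓ = 1)
    (hrec : ∀ j, ℓ < j → j ≤ k → ∀ x, c.lev x = j →
      cf j ≥ c.r x ℓ + ∑ i ∈ Finset.Icc (ℓ + 1) (j - 1), c.r x i * cf i) :
    ∀ j, ℓ < j → j ≤ k → ∀ x, c.lev x = j → cf j ≥ h ℓ x := by
  classical
  intro j
  induction j using Nat.strong_induction_on with
  | _ j IH =>
  intro hℓj hjk x hx
  -- pick a maximizer of h ℓ over level j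
  have hjK : j ≤ c.K := le_trans hjk hk
  obtain ⟨z, hz⟩ := c.level_nonempty j hjK
  have hlevne : (c.level j).Nonempty := ⟨z, by simp [LevelChain.level, hz]⟩
  obtain ⟨x0, hx0mem, hx0max⟩ := Finset.exists_max_image (c.level j) (h ℓ) hlevne
  have hx0lev : c.lev x0 = j := by
    simpa [LevelChain.level] using hx0mem
  have hxmem : x ∈ c.level j := by simp [LevelChain.level, hx]
  -- it suffices to bound h ℓ x0
  have key : h ℓ x0 ≤ cf j := by
    have hj1 : 1 ≤ j := le_trans hℓ (le_of_lt hℓj)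
    set D : ℝ := 1 - c.pSet x0 (c.level j) with hD
    -- D = pSet x0 (levels 0 (j-1)) > 0
    have hone : c.pSet x0 (c.levels 0 j) = 1 := c.pSet_levels_eq_one x0 j hx0lev
    have hsplit0 : c.pSet x0 (c.levels 0 j)
        = c.pSet x0 (c.levels 0 (j - 1)) + c.pSet x0 (c.level j) := by
      rw [LevelChain.pSet, c.levels_split 0 j (Nat.zero_le j) hj1,
        Finset.sum_union (c.levels_disj 0 j hj1)]
      rfl
    have hDeq : D = c.pSet x0 (c.levels 0 (j - 1)) := by
      rw [hD]; linarith [hone, hsplit0]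
    have hDpos : 0 < D := by
      rw [hDeq]; exact hreach j hj1 hjK x0 hx0lev
    -- the recurrence for h at x0
    have hrecur : h ℓ x0 = ∑ y ∈ c.levels ℓ j, c.p x0 y * h ℓ y := by
      have := hh.2.2.2 ℓ x0 (by rw [hx0lev]; exact hℓj)
      rwa [hx0lev] at this
    -- split
    have hsum : h ℓ x0 = (∑ y ∈ c.levels ℓ (j - 1), c.p x0 y * h ℓ y)
        + ∑ y ∈ c.level j, c.p x0 y * h ℓ y := by
      rw [hrecur, c.levels_split ℓ j (le_of_lt hℓj) hj1,
        Finset.sum_union (c.levels_disj ℓ j hj1)]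
    -- bound the level-j part
    have hbound1 : ∑ y ∈ c.level j, c.p x0 y * h ℓ y
        ≤ c.pSet x0 (c.level j) * h ℓ x0 := by
      rw [LevelChain.pSet, Finset.sum_mul]
      apply Finset.sum_le_sum
      intro y hy
      have h0 : 0 ≤ h ℓ y := (hh.1 ℓ y).1
      exact mul_le_mul_of_nonneg_left (hx0max y hy) (c.p_nonneg x0 y)
    -- bound the lower part levelwise
    have hbound2 : ∑ y ∈ c.levels ℓ (j - 1), c.p x0 y * h ℓ y
        ≤ ∑ i ∈ Finset.Icc ℓ (j - 1), c.pSet x0 (c.level i) * cf i := by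
      rw [c.levels_biUnion ℓ (j - 1),
        Finset.sum_biUnion (c.level_pairwise_disj (Finset.Icc ℓ (j - 1)))]
      apply Finset.sum_le_sum
      intro i hi
      rw [Finset.mem_Icc] at hi
      rw [LevelChain.pSet, Finset.sum_mul]
      apply Finset.sum_le_sum
      intro y hy
      have hylev : c.lev y = i := by simpa [LevelChain.level] using hy
      have hhy : h ℓ y ≤ cf i := by
        rcases eq_or_lt_of_le hi.1 with hcase | hcase
        · rw [← hcase, hcfdiag]
          rw [hh.2.1 ℓ y (by omega)]
        · exact IH i (by omega) hcase (by omega) y hylev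
      exact mul_le_mul_of_nonneg_left hhy (c.p_nonneg x0 y)
    -- combine: D * h ℓ x0 ≤ T
    have hDh : D * h ℓ x0 ≤ ∑ i ∈ Finset.Icc ℓ (j - 1), c.pSet x0 (c.level i) * cf i := by
      rw [hD, sub_mul, one_mul]
      nlinarith [hsum, hbound1, hbound2]
    -- rewrite the recurrence bound cf j ≥ T / D
    have hIccsplit : Finset.Icc ℓ (j - 1) = insert ℓ (Finset.Icc (ℓ + 1) (j - 1)) := by
      ext i
      simp only [Finset.mem_Icc, Finset.mem_insert]
      omega
    have hnotmem : ℓ ∉ Finset.Icc (ℓ + 1) (j - 1) := by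
      simp
    have hr : ∀ i, i ≤ j - 1 → c.r x0 i = c.pSet x0 (c.level i) / D := by
      intro i hi
      rw [LevelChain.r, hx0lev, if_neg (by omega), hD]
    have hT : c.r x0 ℓ + ∑ i ∈ Finset.Icc (ℓ + 1) (j - 1), c.r x0 i * cf i
        = (∑ i ∈ Finset.Icc ℓ (j - 1), c.pSet x0 (c.level i) * cf i) / D := by
      rw [hIccsplit, Finset.sum_insert hnotmem, hcfdiag, mul_one, add_div,
        hr ℓ (by omega), Finset.sum_div]
      congr 1
      apply Finset.sum_congr rfl
      intro i hi
      rw [Finset.mem_Icc] at hi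
      rw [hr i hi.2, div_mul_eq_mul_div]
    have hcfj := hrec j hℓj hjk x0 hx0lev
    rw [hT] at hcfj
    have h1 : h ℓ x0 ≤ (∑ i ∈ Finset.Icc ℓ (j - 1), c.pSet x0 (c.level i) * cf i) / D := by
      rw [le_div_iff₀ hDpos]
      nlinarith [hDh]
    exact le_trans h1 hcfj
  exact le_trans (hx0max x hxmem) key
end

section
/- Fix 1 ≤ ℓ < K. For each j with ℓ < j ≤ K define c^min_{j,ℓ} as the sum, over all m ≥ 0 and all strictly decreasing index sequences j > j_1 > j_2 > ⋯ > j_m > ℓ, of the products r_min(X_j,S_{j_1}) · r_min(X_{j_1},S_{j_2}) ⋯ r_min(X_{j_{m−1}},S_{j_m}) · r_min(X_{j_m},S_ℓ), the m = 0 term being r_min(X_j,S_ℓ). Then c^min_{j,ℓ} ≤ h_min(X_j,S_ℓ) for every ℓ < j ≤ K. -/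
open Finset

variable {S : Type*} [Fintype S]

namespace LevelChain
variable [DecidableEq S] (c : LevelChain S)

lemma pSet_nonneg' (x : S) (A : Finset S) : 0 ≤ c.pSet x A :=
  Finset.sum_nonneg fun y _ => c.p_nonneg x y

lemma pSet_level_lt_one' (hreach : c.Reachable) {k : ℕ} (hk1 : 1 ≤ k) (hkK : k ≤ c.K)
    {x : S} (hx : c.lev x = k) : c.pSet x (c.level k) < 1 := by
  have hpos := hreach k hk1 hkK x hx
  have hdisj : Disjoint (c.level k) (c.levels 0 (k-1)) := by
    simp only [Finset.disjoint_left, level, levels, Finset.mem_filter, Finset.mem_univ, true_and]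
    intro a ha hb
    omega
  have hsum : c.pSet x (c.level k) + c.pSet x (c.levels 0 (k-1)) ≤ 1 := by
    rw [← c.p_row_sum x,
      show c.pSet x (c.level k) + c.pSet x (c.levels 0 (k-1))
        = ∑ y ∈ (c.level k) ∪ (c.levels 0 (k-1)), c.p x y from (Finset.sum_union hdisj).symm]
    exact Finset.sum_le_sum_of_subset_of_nonneg (Finset.subset_univ _)
      (fun y _ _ => c.p_nonneg x y)
  linarith

lemma r_nonneg' (hreach : c.Reachable) {x : S} (h1 : 1 ≤ c.lev x) (hK : c.lev x ≤ c.K)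
    (i : ℕ) : 0 ≤ c.r x i := by
  unfold r
  split
  · exact le_refl 0
  · apply div_nonneg (c.pSet_nonneg' x _)
    have := c.pSet_level_lt_one' hreach h1 hK rfl
    linarith

lemma rmin_le_r' {k : ℕ} {x : S} (hx : c.lev x = k) (i : ℕ) : c.rmin k i ≤ c.r x i := by
  apply csInf_le
  · exact (Set.toFinite _).bddBelow
  · exact ⟨x, hx, rfl⟩

lemma rmin_nonneg' (hreach : c.Reachable) {k : ℕ} (hk1 : 1 ≤ k) (hkK : k ≤ c.K) (i : ℕ) :
    0 ≤ c.rmin k i := by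
  apply le_csInf
  · obtain ⟨x, hx⟩ := c.level_nonempty k hkK
    exact ⟨_, ⟨x, hx, rfl⟩⟩
  · rintro b ⟨x, hx, rfl⟩
    simp only [Set.mem_setOf_eq] at hx
    exact c.r_nonneg' hreach (by omega) (by omega) i

lemma sum_levels' (a b : ℕ) (f : S → ℝ) :
    ∑ y ∈ c.levels a b, f y = ∑ i ∈ Finset.Icc a b, ∑ y ∈ c.level i, f y := by
  rw [show c.levels a b = (Finset.Icc a b).biUnion c.level by
    ext y
    simp only [levels, level, Finset.mem_filter, Finset.mem_univ, true_and, Finset.mem_biUnion,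
      Finset.mem_Icc]
    constructor
    · rintro ⟨h1, h2⟩; exact ⟨c.lev y, ⟨h1, h2⟩, rfl⟩
    · rintro ⟨i, hi, rfl⟩; exact hi]
  apply Finset.sum_biUnion
  intro i _ j _ hij
  simp only [Function.onFun, Finset.disjoint_left, level, Finset.mem_filter, Finset.mem_univ,
    true_and]
  intro a ha hb
  exact hij (ha ▸ hb ▸ rfl)

end LevelChain

/-- The explicit lower-bound coefficients `c^min_{j,ℓ}`, given by the
sum over all strictly decreasing index sequences from `j` to `ℓ` of the products of the
corresponding `r_min` values (equivalently, characterized by the recursion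
`c^min_{j,ℓ} = r_min(X_j,S_ℓ) + Σ_{ℓ<i<j} r_min(X_j,S_i)·c^min_{i,ℓ}`), satisfy
`c^min_{j,ℓ} ≤ h_min(X_j,S_ℓ)` for every `ℓ < j ≤ K`. -/
theorem explicit_lower_coefficients_le_hitProb
    (c : LevelChain S) (hreach : c.Reachable)
    (h : ℕ → S → ℝ) (hh : c.IsHitProb h)
    (ℓ : ℕ) (hℓ : 1 ≤ ℓ) (hℓK : ℓ < c.K)
    (cmin : ℕ → ℝ)
    (hcmin : ∀ j, ℓ < j →
      cmin j = c.rmin j ℓ + ∑ i ∈ Finset.Ioo ℓ j, c.rmin j i * cmin i) :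
    ∀ j, ℓ < j → j ≤ c.K → ∀ x, c.lev x = j → cmin j ≤ h ℓ x := by

  classical
  obtain ⟨hh01, hh1, hh0, hhrec⟩ := hh
  suffices key : ∀ j, ℓ < j → j ≤ c.K → 0 ≤ cmin j ∧ ∀ x, c.lev x = j → cmin j ≤ h ℓ x by
    intro j hj hjK x hx
    exact (key j hj hjK).2 x hx
  intro j
  induction j using Nat.strong_induction_on with
  | _ j IH =>
  intro hℓj hjK
  have hj1 : 1 ≤ j := by omega
  have hnn : 0 ≤ cmin j := by
    rw [hcmin j hℓj]
    have h1 : 0 ≤ c.rmin j ℓ := c.rmin_nonneg' hreach hj1 hjK ℓ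
    have h2 : 0 ≤ ∑ i ∈ Finset.Ioo ℓ j, c.rmin j i * cmin i := by
      apply Finset.sum_nonneg
      intro i hi
      simp only [Finset.mem_Ioo] at hi
      exact mul_nonneg (c.rmin_nonneg' hreach hj1 hjK i)
        (IH i hi.2 hi.1 (by omega)).1
    linarith
  refine ⟨hnn, ?_⟩
  obtain ⟨x0, hx0⟩ := c.level_nonempty j hjK
  have hx0mem : x0 ∈ c.level j := by simp [LevelChain.level, hx0]
  obtain ⟨xs, hxsmem, hmin⟩ := Finset.exists_min_image (c.level j) (h ℓ) ⟨x0, hx0mem⟩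
  have hxs : c.lev xs = j := by simpa [LevelChain.level] using hxsmem
  have hq1 : c.pSet xs (c.level j) < 1 := c.pSet_level_lt_one' hreach hj1 hjK hxs
  have hqpos : 0 < 1 - c.pSet xs (c.level j) := by linarith
  have heq : h ℓ xs = ∑ i ∈ Finset.Icc ℓ j, ∑ y ∈ c.level i, c.p xs y * h ℓ y := by
    have hrec := hhrec ℓ xs (by omega)
    rw [hxs] at hrec
    rw [hrec, c.sum_levels' ℓ j]
  have hIcc : Finset.Icc ℓ j = insert j (insert ℓ (Finset.Ioo ℓ j)) := by
    ext i
    simp only [Finset.mem_Icc, Finset.mem_insert, Finset.mem_Ioo]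
    omega
  rw [hIcc, Finset.sum_insert (by simp only [Finset.mem_insert, Finset.mem_Ioo]; omega),
    Finset.sum_insert (by simp)] at heq
  have hAj : c.pSet xs (c.level j) * h ℓ xs ≤ ∑ y ∈ c.level j, c.p xs y * h ℓ y := by
    rw [LevelChain.pSet, Finset.sum_mul]
    apply Finset.sum_le_sum
    intro y hy
    exact mul_le_mul_of_nonneg_left (hmin y hy) (c.p_nonneg xs y)
  have hAl : ∑ y ∈ c.level ℓ, c.p xs y * h ℓ y = c.pSet xs (c.level ℓ) := by
    rw [LevelChain.pSet]
    apply Finset.sum_congr rfl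
    intro y hy
    have hyl : c.lev y = ℓ := by simpa [LevelChain.level] using hy
    rw [hh1 ℓ y hyl, mul_one]
  have hAi : ∀ i ∈ Finset.Ioo ℓ j,
      c.pSet xs (c.level i) * cmin i ≤ ∑ y ∈ c.level i, c.p xs y * h ℓ y := by
    intro i hi
    simp only [Finset.mem_Ioo] at hi
    rw [LevelChain.pSet, Finset.sum_mul]
    apply Finset.sum_le_sum
    intro y hy
    have hyl : c.lev y = i := by simpa [LevelChain.level] using hy
    exact mul_le_mul_of_nonneg_left ((IH i hi.2 hi.1 (by omega)).2 y hyl) (c.p_nonneg xs y)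
  have hstar_ge : c.pSet xs (c.level j) * h ℓ xs +
      (c.pSet xs (c.level ℓ) + ∑ i ∈ Finset.Ioo ℓ j, c.pSet xs (c.level i) * cmin i)
      ≤ h ℓ xs := by
    calc c.pSet xs (c.level j) * h ℓ xs +
        (c.pSet xs (c.level ℓ) + ∑ i ∈ Finset.Ioo ℓ j, c.pSet xs (c.level i) * cmin i)
        ≤ (∑ y ∈ c.level j, c.p xs y * h ℓ y) +
          ((∑ y ∈ c.level ℓ, c.p xs y * h ℓ y) +
            ∑ i ∈ Finset.Ioo ℓ j, ∑ y ∈ c.level i, c.p xs y * h ℓ y) :=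
        add_le_add hAj (add_le_add (le_of_eq hAl.symm) (Finset.sum_le_sum hAi))
      _ = h ℓ xs := heq.symm
  have hdiv : (c.pSet xs (c.level ℓ) + ∑ i ∈ Finset.Ioo ℓ j, c.pSet xs (c.level i) * cmin i)
      / (1 - c.pSet xs (c.level j)) ≤ h ℓ xs := by
    rw [div_le_iff₀ hqpos]
    nlinarith [hstar_ge]
  have hrℓ : c.r xs ℓ = c.pSet xs (c.level ℓ) / (1 - c.pSet xs (c.level j)) := by
    rw [LevelChain.r, if_neg (by omega : ¬ ℓ = c.lev xs), hxs]
  have hri : ∀ i ∈ Finset.Ioo ℓ j,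
      c.r xs i = c.pSet xs (c.level i) / (1 - c.pSet xs (c.level j)) := by
    intro i hi
    simp only [Finset.mem_Ioo] at hi
    rw [LevelChain.r, if_neg (by omega : ¬ i = c.lev xs), hxs]
  have hkey : cmin j ≤ (c.pSet xs (c.level ℓ)
      + ∑ i ∈ Finset.Ioo ℓ j, c.pSet xs (c.level i) * cmin i)
      / (1 - c.pSet xs (c.level j)) := by
    rw [hcmin j hℓj, add_div, Finset.sum_div]
    apply add_le_add
    · rw [← hrℓ]
      exact c.rmin_le_r' hxs ℓ
    · apply Finset.sum_le_sum
      intro i hi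
      have hii := hi
      simp only [Finset.mem_Ioo] at hii
      rw [mul_div_right_comm, ← hri i hi]
      exact mul_le_mul_of_nonneg_right (c.rmin_le_r' hxs i)
        (IH i hii.2 hii.1 (by omega)).1
  intro x hx
  have hxm : x ∈ c.level j := by simp [LevelChain.level, hx]
  calc cmin j ≤ _ := hkey
    _ ≤ h ℓ xs := hdiv
    _ ≤ h ℓ x := hmin x hxm
end

section
/- Fix 1 ≤ ℓ < K. For each j with ℓ < j ≤ K define c^max_{j,ℓ} as the sum, over all m ≥ 0 and all strictly decreasing index sequences j > j_1 > j_2 > ⋯ > j_m > ℓ, of the products r_max(X_j,S_{j_1}) · r_max(X_{j_1},S_{j_2}) ⋯ r_max(X_{j_{m−1}},S_{j_m}) · r_max(X_{j_m},S_ℓ), the m = 0 term being r_max(X_j,S_ℓ). Then c^max_{j,ℓ} ≥ h_max(X_j,S_ℓ) for every ℓ < j ≤ K. -/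
open Finset

variable {S : Type*} [Fintype S]

/-- The explicit upper-bound coefficients `c^max_{j,ℓ}`, given by the
sum over all strictly decreasing index sequences from `j` to `ℓ` of the products of the
corresponding `r_max` values (equivalently, characterized by the recursion
`c^max_{j,ℓ} = r_max(X_j,S_ℓ) + Σ_{ℓ<i<j} r_max(X_j,S_i)·c^max_{i,ℓ}`), satisfy
`c^max_{j,ℓ} ≥ h_max(X_j,S_ℓ)` for every `ℓ < j ≤ K`. -/
theorem explicit_upper_coefficients_ge_hitProb
    (c : LevelChain S) (hreach : c.Reachable)
    (h : ℕ → S → ℝ) (hh : c.IsHitProb h)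
    (ℓ : ℕ) (hℓ : 1 ≤ ℓ) (hℓK : ℓ < c.K)
    (cmax : ℕ → ℝ)
    (hcmax : ∀ j, ℓ < j →
      cmax j = c.rmax j ℓ + ∑ i ∈ Finset.Ioo ℓ j, c.rmax j i * cmax i) :
    ∀ j, ℓ < j → j ≤ c.K → ∀ x, c.lev x = j → cmax j ≥ h ℓ x := by
  classical
  obtain ⟨h01, hone, hzero, hrec⟩ := hh
  intro j
  induction j using Nat.strong_induction_on with
  | _ j IH =>
  intro hℓj hjK x hx
  have hj1 : 1 ≤ j := le_trans hℓ hℓj.le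
  -- basic nonnegativity of pSet
  have pSet_nonneg : ∀ (z : S) (A : Finset S), 0 ≤ c.pSet z A := fun z A =>
    Finset.sum_nonneg fun y _ => c.p_nonneg z y
  -- full mass on levels 0..j
  have hfull : ∀ z : S, c.lev z = j → c.pSet z (c.levels 0 j) = 1 := by
    intro z hz
    rw [← c.p_row_sum z]
    unfold LevelChain.pSet LevelChain.levels
    apply Finset.sum_subset (Finset.filter_subset _ _)
    intro y _ hy
    simp only [Finset.mem_filter, Finset.mem_univ, true_and, not_and, not_le] at hy
    exact c.elitist z y (by omega)
  have hUnion : c.levels 0 (j-1) ∪ c.level j = c.levels 0 j := by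
    ext y
    simp only [Finset.mem_union, LevelChain.levels, LevelChain.level, Finset.mem_filter,
      Finset.mem_univ, true_and]
    omega
  have hDisj : Disjoint (c.levels 0 (j-1)) (c.level j) := by
    rw [Finset.disjoint_left]
    intro y hy1 hy2
    simp only [LevelChain.levels, LevelChain.level, Finset.mem_filter, Finset.mem_univ,
      true_and] at hy1 hy2
    omega
  have hsplit : ∀ z : S, c.lev z = j →
      c.pSet z (c.levels 0 (j-1)) = 1 - c.pSet z (c.level j) := by
    intro z hz
    have : c.pSet z (c.levels 0 (j-1)) + c.pSet z (c.level j) = 1 := by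
      rw [← hfull z hz, ← hUnion]
      exact (Finset.sum_union hDisj).symm
    linarith
  have hDpos : ∀ z : S, c.lev z = j → 0 < 1 - c.pSet z (c.level j) := by
    intro z hz
    rw [← hsplit z hz]
    exact hreach j hj1 hjK z hz
  -- r formula at level j
  have hr : ∀ z : S, c.lev z = j → ∀ i, i ≠ j →
      c.r z i = c.pSet z (c.level i) / (1 - c.pSet z (c.level j)) := by
    intro z hz i hi
    unfold LevelChain.r
    rw [hz, if_neg hi]
  have hr_nonneg : ∀ z : S, c.lev z = j → ∀ i, i ≠ j → 0 ≤ c.r z i := by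
    intro z hz i hi
    rw [hr z hz i hi]
    exact div_nonneg (pSet_nonneg z _) (hDpos z hz).le
  -- rmax bounds
  have hr_le_rmax : ∀ z : S, c.lev z = j → ∀ i, c.r z i ≤ c.rmax j i := by
    intro z hz i
    exact le_csSup (Set.toFinite _).bddAbove ⟨z, hz, rfl⟩
  obtain ⟨z0, hz0⟩ := c.level_nonempty j hjK
  have hrmax_nonneg : ∀ i, i ≠ j → 0 ≤ c.rmax j i := fun i hi =>
    le_trans (hr_nonneg z0 hz0 i hi) (hr_le_rmax z0 hz0 i)
  -- cmax is nonneg on Ioo ℓ j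
  have hcmax_nonneg : ∀ i, ℓ < i → i < j → 0 ≤ cmax i := by
    intro i h1 h2
    obtain ⟨y, hy⟩ := c.level_nonempty i (by omega)
    exact le_trans (h01 ℓ y).1 (IH i h2 h1 (by omega) y hy)
  -- pick a maximizer of h ℓ over level j
  have hne : (c.level j).Nonempty := ⟨z0, by
    simp only [LevelChain.level, Finset.mem_filter, Finset.mem_univ, true_and]; exact hz0⟩
  obtain ⟨z, hzmem, hzmax⟩ := Finset.exists_max_image (c.level j) (h ℓ) hne
  have hz : c.lev z = j := by
    simpa only [LevelChain.level, Finset.mem_filter, Finset.mem_univ, true_and] using hzmem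
  have hxz : h ℓ x ≤ h ℓ z := hzmax x (by
    simp only [LevelChain.level, Finset.mem_filter, Finset.mem_univ, true_and]; exact hx)
  -- suffices to bound h ℓ z
  refine le_trans hxz ?_
  set M := h ℓ z with hM
  set B : ℕ → ℝ := fun i => if i = ℓ then (1:ℝ) else cmax i with hB
  have hB_nonneg : ∀ i, ℓ ≤ i → i < j → 0 ≤ B i := by
    intro i h1 h2
    simp only [hB]
    split
    · norm_num
    · exact hcmax_nonneg i (by omega) h2
  -- the recursion for z
  have hrecz : M = ∑ y ∈ c.levels ℓ j, c.p z y * h ℓ y := by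
    have := hrec ℓ z (by omega)
    rwa [hz] at this
  have hUnion2 : c.levels ℓ (j-1) ∪ c.level j = c.levels ℓ j := by
    ext y
    simp only [Finset.mem_union, LevelChain.levels, LevelChain.level, Finset.mem_filter,
      Finset.mem_univ, true_and]
    omega
  have hDisj2 : Disjoint (c.levels ℓ (j-1)) (c.level j) := by
    rw [Finset.disjoint_left]
    intro y hy1 hy2
    simp only [LevelChain.levels, LevelChain.level, Finset.mem_filter, Finset.mem_univ,
      true_and] at hy1 hy2
    omega
  have hrecz2 : M = (∑ y ∈ c.levels ℓ (j-1), c.p z y * h ℓ y)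
      + ∑ y ∈ c.level j, c.p z y * h ℓ y := by
    rw [hrecz, ← hUnion2, Finset.sum_union hDisj2]
  -- bound the same-level part
  have hbound1 : ∑ y ∈ c.level j, c.p z y * h ℓ y ≤ c.pSet z (c.level j) * M := by
    unfold LevelChain.pSet
    rw [Finset.sum_mul]
    apply Finset.sum_le_sum
    intro y hy
    exact mul_le_mul_of_nonneg_left (hzmax y hy) (c.p_nonneg z y)
  -- bound the lower-level part
  have hbound2 : ∑ y ∈ c.levels ℓ (j-1), c.p z y * h ℓ y
      ≤ ∑ y ∈ c.levels ℓ (j-1), c.p z y * B (c.lev y) := by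
    apply Finset.sum_le_sum
    intro y hy
    simp only [LevelChain.levels, Finset.mem_filter, Finset.mem_univ, true_and] at hy
    apply mul_le_mul_of_nonneg_left _ (c.p_nonneg z y)
    by_cases hyl : c.lev y = ℓ
    · rw [hone ℓ y hyl]
      simp [hB, hyl]
    · have : B (c.lev y) = cmax (c.lev y) := by simp [hB, hyl]
      rw [this]
      exact IH (c.lev y) (by omega) (by omega) (by omega) y rfl
  -- regroup the lower-level part by levels
  have hregroup : ∑ y ∈ c.levels ℓ (j-1), c.p z y * B (c.lev y)
      = ∑ i ∈ Finset.Icc ℓ (j-1), c.pSet z (c.level i) * B i := by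
    rw [← Finset.sum_fiberwise_of_maps_to (g := c.lev) (t := Finset.Icc ℓ (j-1))
      (fun y hy => by
        simp only [LevelChain.levels, Finset.mem_filter, Finset.mem_univ, true_and] at hy
        simp only [Finset.mem_Icc]
        omega)]
    apply Finset.sum_congr rfl
    intro i hi
    simp only [Finset.mem_Icc] at hi
    have hfi : (c.levels ℓ (j-1)).filter (fun y => c.lev y = i) = c.level i := by
      ext y
      simp only [LevelChain.levels, LevelChain.level, Finset.mem_filter, Finset.mem_univ,
        true_and]
      omega
    rw [hfi]
    unfold LevelChain.pSet
    rw [Finset.sum_mul]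
    apply Finset.sum_congr rfl
    intro y hy
    simp only [LevelChain.level, Finset.mem_filter, Finset.mem_univ, true_and] at hy
    rw [hy]
  set T := ∑ i ∈ Finset.Icc ℓ (j-1), c.pSet z (c.level i) * B i with hT
  have hDM : (1 - c.pSet z (c.level j)) * M ≤ T := by
    have := hrecz2
    nlinarith [hbound1, hbound2, hregroup]
  have hMle : M ≤ T / (1 - c.pSet z (c.level j)) := by
    rw [le_div_iff₀ (hDpos z hz)]
    linarith [hDM]
  -- rewrite T/D as sum of r's
  have hTD : T / (1 - c.pSet z (c.level j))
      = ∑ i ∈ Finset.Icc ℓ (j-1), c.r z i * B i := by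
    rw [hT, Finset.sum_div]
    apply Finset.sum_congr rfl
    intro i hi
    simp only [Finset.mem_Icc] at hi
    rw [hr z hz i (by omega)]
    ring
  have hle2 : ∑ i ∈ Finset.Icc ℓ (j-1), c.r z i * B i
      ≤ ∑ i ∈ Finset.Icc ℓ (j-1), c.rmax j i * B i := by
    apply Finset.sum_le_sum
    intro i hi
    simp only [Finset.mem_Icc] at hi
    exact mul_le_mul_of_nonneg_right (hr_le_rmax z hz i) (hB_nonneg i hi.1 (by omega))
  have hIcc : Finset.Icc ℓ (j-1) = insert ℓ (Finset.Ioo ℓ j) := by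
    ext i
    simp only [Finset.mem_Icc, Finset.mem_insert, Finset.mem_Ioo]
    omega
  have hfinal : ∑ i ∈ Finset.Icc ℓ (j-1), c.rmax j i * B i = cmax j := by
    rw [hIcc, Finset.sum_insert (by simp [Finset.mem_Ioo])]
    rw [hcmax j hℓj]
    have h1 : B ℓ = 1 := by simp [hB]
    rw [h1, mul_one]
    congr 1
    apply Finset.sum_congr rfl
    intro i hi
    simp only [Finset.mem_Ioo] at hi
    have : B i = cmax i := by simp [hB]; omega
    rw [this]
  calc M ≤ T / (1 - c.pSet z (c.level j)) := hMle
    _ = ∑ i ∈ Finset.Icc ℓ (j-1), c.r z i * B i := hTD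
    _ ≤ ∑ i ∈ Finset.Icc ℓ (j-1), c.rmax j i * B i := hle2
    _ = cmax j := hfinal
end

section
/- Let 1 ≤ ℓ < k ≤ K and let coefficients c_{j,i} ∈ [0,1] be given for ℓ ≤ i ≤ j ≤ k with c_{j,j} = 1 for all j. If for every pair ℓ ≤ i < j ≤ k one has c_{j,i} ≥ Σ_{i'=i+1}^{j} c_{j,i'} · r_max(X_{i'},S_i), then c_{j,ℓ} ≥ h_max(X_j,S_ℓ) for every ℓ < j ≤ k. -/
open Finset

variable {S : Type*} [Fintype S]

/- ### Auxiliary path-sum machinery -/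

noncomputable def pathSum (R : ℕ → ℕ → ℝ) (i : ℕ) : ℕ → ℝ
  | j =>
    if _hij : i < j then
      ∑ m ∈ (Finset.Ico i j).attach, R j m.1 * pathSum R i m.1
    else if i = j then 1 else 0
  termination_by j => j
  decreasing_by exact (Finset.mem_Ico.mp m.2).2

lemma pathSum_self (R : ℕ → ℕ → ℝ) (i : ℕ) : pathSum R i i = 1 := by
  rw [pathSum]; simp

lemma pathSum_of_lt (R : ℕ → ℕ → ℝ) {i j : ℕ} (h : i < j) :
    pathSum R i j = ∑ m ∈ Finset.Ico i j, R j m * pathSum R i m := by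
  rw [pathSum, dif_pos h]
  exact Finset.sum_attach (Finset.Ico i j) (fun m => R j m * pathSum R i m)

lemma pathSum_nonneg (R : ℕ → ℕ → ℝ) (i : ℕ) :
    ∀ j, (∀ a b, i ≤ b → b < a → a ≤ j → 0 ≤ R a b) → 0 ≤ pathSum R i j := by
  intro j
  induction j using Nat.strong_induction_on with
  | _ j IH =>
    intro hR
    rcases lt_trichotomy i j with hij | rfl | hji
    · rw [pathSum_of_lt R hij]
      refine Finset.sum_nonneg fun m hm => ?_
      rw [Finset.mem_Ico] at hm
      exact mul_nonneg (hR j m hm.1 hm.2 le_rfl)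
        (IH m hm.2 fun a b h1 h2 h3 => hR a b h1 h2 (h3.trans hm.2.le))
    · rw [pathSum_self]; norm_num
    · rw [pathSum]; rw [dif_neg (by omega), if_neg (by omega)]

lemma pathSum_lastStep (R : ℕ → ℕ → ℝ) (i : ℕ) :
    ∀ j, i < j → pathSum R i j = ∑ m ∈ Finset.Icc (i + 1) j, pathSum R m j * R m i := by
  intro j
  induction j using Nat.strong_induction_on with
  | _ j IH =>
    intro hij
    rw [pathSum_of_lt R hij, Finset.sum_eq_sum_Ico_succ_bot hij, pathSum_self, mul_one]
    have hcongr : ∑ m ∈ Finset.Ico (i + 1) j, R j m * pathSum R i m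
        = ∑ m ∈ Finset.Ico (i + 1) j, ∑ i' ∈ Finset.Icc (i + 1) m,
            R j m * (pathSum R i' m * R i' i) := by
      refine Finset.sum_congr rfl fun m hm => ?_
      rw [Finset.mem_Ico] at hm
      rw [IH m hm.2 (by omega), Finset.mul_sum]
    rw [hcongr]
    rw [Finset.sum_comm' (t' := Finset.Ico (i + 1) j) (s' := fun i' => Finset.Ico i' j)
      (by intro m i'; simp only [Finset.mem_Ico, Finset.mem_Icc]; omega)]
    have hinner : ∀ i' ∈ Finset.Ico (i + 1) j,
        ∑ m ∈ Finset.Ico i' j, R j m * (pathSum R i' m * R i' i)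
          = pathSum R i' j * R i' i := by
      intro i' hi'
      rw [Finset.mem_Ico] at hi'
      rw [pathSum_of_lt R hi'.2, Finset.sum_mul]
      exact Finset.sum_congr rfl fun m _ => by ring
    rw [Finset.sum_congr rfl hinner]
    rw [← Finset.Ico_add_one_right_eq_Icc, Finset.sum_Ico_succ_top (by omega), pathSum_self, one_mul]
    ring

/- ### Auxiliary chain lemmas -/

lemma aux_pSet_nonneg (c : LevelChain S) (x : S) (A : Finset S) : 0 ≤ c.pSet x A :=
  Finset.sum_nonneg fun y _ => c.p_nonneg x y

lemma aux_one_sub (c : LevelChain S) {x : S}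
    (h1 : 1 ≤ c.lev x) :
    1 - c.pSet x (c.level (c.lev x)) = c.pSet x (c.levels 0 (c.lev x - 1)) := by
  classical
  have hsum : c.pSet x (c.levels 0 (c.lev x)) = 1 := by
    rw [← c.p_row_sum x]
    unfold LevelChain.pSet
    refine Finset.sum_subset (Finset.subset_univ _) ?_
    intro y _ hy
    simp only [LevelChain.levels, Finset.mem_filter, Finset.mem_univ, true_and,
      not_and, not_le] at hy
    exact c.elitist x y (hy (Nat.zero_le _))
  have hsplit : c.levels 0 (c.lev x) = c.levels 0 (c.lev x - 1) ∪ c.level (c.lev x) := by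
    ext y
    simp only [LevelChain.levels, LevelChain.level, Finset.mem_union, Finset.mem_filter,
      Finset.mem_univ, true_and]
    omega
  have hdisj : Disjoint (c.levels 0 (c.lev x - 1)) (c.level (c.lev x)) := by
    rw [Finset.disjoint_left]
    intro y hy1 hy2
    simp only [LevelChain.levels, LevelChain.level, Finset.mem_filter, Finset.mem_univ,
      true_and] at hy1 hy2
    omega
  have := Finset.sum_union (f := c.p x) hdisj
  rw [LevelChain.pSet, hsplit] at hsum
  rw [this] at hsum
  unfold LevelChain.pSet
  linarith

lemma aux_denom_pos (c : LevelChain S) (hreach : c.Reachable) {x : S}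
    (h1 : 1 ≤ c.lev x) (h2 : c.lev x ≤ c.K) :
    0 < 1 - c.pSet x (c.level (c.lev x)) := by
  rw [aux_one_sub c h1]
  exact hreach (c.lev x) h1 h2 x rfl

lemma aux_r_nonneg (c : LevelChain S) (hreach : c.Reachable) {x : S}
    (h1 : 1 ≤ c.lev x) (h2 : c.lev x ≤ c.K) (i : ℕ) : 0 ≤ c.r x i := by
  unfold LevelChain.r
  split
  · exact le_rfl
  · exact div_nonneg (aux_pSet_nonneg c x _) (aux_denom_pos c hreach h1 h2).le

lemma aux_r_le_rmax (c : LevelChain S) {x : S} {a : ℕ} (hx : c.lev x = a) (i : ℕ) :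
    c.r x i ≤ c.rmax a i := by
  refine le_csSup ?_ ⟨x, hx, rfl⟩
  exact (Set.toFinite _).image _ |>.bddAbove

lemma aux_rmax_nonneg (c : LevelChain S) (hreach : c.Reachable) {a : ℕ}
    (h1 : 1 ≤ a) (h2 : a ≤ c.K) (i : ℕ) : 0 ≤ c.rmax a i := by
  obtain ⟨x, hx⟩ := c.level_nonempty a h2
  refine le_trans (aux_r_nonneg c hreach (by omega) (by omega) i) (aux_r_le_rmax c hx i)

/-- Alternative (backward) upper-bound drift condition: if
`c_{j,j} = 1` and for every `ℓ ≤ i < j ≤ k`,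
`c_{j,i} ≥ Σ_{i'=i+1}^{j} c_{j,i'}·r_max(X_{i'},S_i)`,
then `c_{j,ℓ} ≥ h_max(X_j,S_ℓ)` for every `ℓ < j ≤ k`. -/
theorem alt_upper_coefficients_ge_hitProb
    (c : LevelChain S) (hreach : c.Reachable)
    (h : ℕ → S → ℝ) (hh : c.IsHitProb h)
    (ℓ k : ℕ) (hℓ : 1 ≤ ℓ) (hℓk : ℓ < k) (hk : k ≤ c.K)
    (cf : ℕ → ℕ → ℝ)
    (hcf01 : ∀ i j, ℓ ≤ i → i ≤ j → j ≤ k → 0 ≤ cf j i ∧ cf j i ≤ 1)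
    (hcfdiag : ∀ j, ℓ ≤ j → j ≤ k → cf j j = 1)
    (hrec : ∀ i j, ℓ ≤ i → i < j → j ≤ k →
      cf j i ≥ ∑ i' ∈ Finset.Icc (i + 1) j, cf j i' * c.rmax i' i) :
    ∀ j, ℓ < j → j ≤ k → ∀ x, c.lev x = j → cf j ℓ ≥ h ℓ x := by
  classical
  have hrmax0 : ∀ a b, ℓ ≤ b → b < a → a ≤ k → 0 ≤ c.rmax a b := fun a b h1 h2 h3 =>
    aux_rmax_nonneg c hreach (by omega) (by omega) b
  -- Part B : the coefficients dominate the path sums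
  have hB : ∀ j, ℓ ≤ j → j ≤ k → ∀ d i, ℓ ≤ i → i ≤ j → j - i ≤ d →
      pathSum c.rmax i j ≤ cf j i := by
    intro j hlj hjk d
    induction d with
    | zero =>
      intro i h1 h2 h3
      have hij : i = j := by omega
      subst hij
      rw [pathSum_self]
      exact (hcfdiag i h1 hjk).ge
    | succ d IHd =>
      intro i h1 h2 h3
      rcases eq_or_lt_of_le h2 with rfl | hlt
      · rw [pathSum_self]
        exact (hcfdiag i h1 hjk).ge
      · rw [pathSum_lastStep c.rmax i j hlt]
        refine le_trans (Finset.sum_le_sum ?_) (hrec i j h1 hlt hjk)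
        intro m hm
        rw [Finset.mem_Icc] at hm
        exact mul_le_mul_of_nonneg_right
          (IHd m (by omega) (by omega) (by omega))
          (hrmax0 m i h1 (by omega) (by omega))
  -- Part A : the path sums dominate the hitting probabilities
  have hA : ∀ j, ℓ ≤ j → j ≤ k → ∀ x, c.lev x = j → h ℓ x ≤ pathSum c.rmax ℓ j := by
    intro j
    induction j using Nat.strong_induction_on with
    | _ j IH =>
      intro hlj hjk x hx
      rcases eq_or_lt_of_le hlj with rfl | hlt
      · rw [pathSum_self]
        exact (hh.2.1 ℓ x hx).le
      · have h1j : 1 ≤ j := by omega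
        have hjK : j ≤ c.K := hjk.trans hk
        have hne : (c.level j).Nonempty := by
          obtain ⟨x0, hx0⟩ := c.level_nonempty j hjK
          exact ⟨x0, by simp [LevelChain.level, hx0]⟩
        obtain ⟨x0, hx0mem, hx0max⟩ := Finset.exists_max_image (c.level j) (h ℓ) hne
        have hx0lev : c.lev x0 = j := by
          simpa [LevelChain.level] using hx0mem
        have hxmem : x ∈ c.level j := by simp [LevelChain.level, hx]
        refine le_trans (hx0max x hxmem) ?_
        set D := c.pSet x0 (c.levels 0 (j - 1)) with hD
        have hDpos : 0 < D := hreach j h1j hjK x0 hx0lev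
        have hDeq : 1 - c.pSet x0 (c.level j) = D := by
          have h' := aux_one_sub c (x := x0) (by omega)
          rwa [hx0lev] at h'
        have hrec0 : h ℓ x0 = ∑ y ∈ c.levels ℓ j, c.p x0 y * h ℓ y := by
          have h' := hh.2.2.2 ℓ x0 (by omega)
          rwa [hx0lev] at h'
        have hsplit : c.levels ℓ j = c.levels ℓ (j - 1) ∪ c.level j := by
          ext y
          simp only [LevelChain.levels, LevelChain.level, Finset.mem_union,
            Finset.mem_filter, Finset.mem_univ, true_and]
          omega
        have hdisj : Disjoint (c.levels ℓ (j - 1)) (c.level j) := by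
          rw [Finset.disjoint_left]
          intro y hy1 hy2
          simp only [LevelChain.levels, LevelChain.level, Finset.mem_filter,
            Finset.mem_univ, true_and] at hy1 hy2
          omega
        have hbiU : c.levels ℓ (j - 1) = (Finset.Ico ℓ j).biUnion c.level := by
          ext y
          simp only [LevelChain.levels, LevelChain.level, Finset.mem_biUnion,
            Finset.mem_filter, Finset.mem_univ, true_and, Finset.mem_Ico]
          constructor
          · intro hy; exact ⟨c.lev y, by omega, rfl⟩
          · rintro ⟨i, hi, rfl⟩; omega
        have hpdisj : (↑(Finset.Ico ℓ j) : Set ℕ).PairwiseDisjoint c.level := by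
          intro a _ b _ hab
          simp only [Function.onFun]
          rw [Finset.disjoint_left]
          intro y hy1 hy2
          simp only [LevelChain.level, Finset.mem_filter, Finset.mem_univ, true_and] at hy1 hy2
          omega
        have key1 : ∑ y ∈ c.level j, c.p x0 y * h ℓ y ≤ c.pSet x0 (c.level j) * h ℓ x0 := by
          rw [LevelChain.pSet, Finset.sum_mul]
          exact Finset.sum_le_sum fun y hy =>
            mul_le_mul_of_nonneg_left (hx0max y hy) (c.p_nonneg x0 y)
        have key2 : ∑ y ∈ c.levels ℓ (j - 1), c.p x0 y * h ℓ y ≤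
            ∑ i ∈ Finset.Ico ℓ j, c.pSet x0 (c.level i) * pathSum c.rmax ℓ i := by
          rw [hbiU, Finset.sum_biUnion hpdisj]
          refine Finset.sum_le_sum fun i hi => ?_
          rw [Finset.mem_Ico] at hi
          rw [LevelChain.pSet, Finset.sum_mul]
          refine Finset.sum_le_sum fun y hy => ?_
          have hylev : c.lev y = i := by simpa [LevelChain.level] using hy
          exact mul_le_mul_of_nonneg_left
            (IH i hi.2 hi.1 (by omega) y hylev) (c.p_nonneg x0 y)
        set B := ∑ i ∈ Finset.Ico ℓ j, c.pSet x0 (c.level i) * pathSum c.rmax ℓ i with hBdef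
        have hsum2 : h ℓ x0 = ∑ y ∈ c.levels ℓ (j - 1), c.p x0 y * h ℓ y
            + ∑ y ∈ c.level j, c.p x0 y * h ℓ y := by
          rw [hrec0, hsplit, Finset.sum_union hdisj]
        have hineq : h ℓ x0 ≤ c.pSet x0 (c.level j) * h ℓ x0 + B := by
          linarith [key1, key2, hsum2]
        have hmul : h ℓ x0 * D ≤ B := by
          have e1 : c.pSet x0 (c.level j) * h ℓ x0 = (1 - D) * h ℓ x0 := by
            rw [← hDeq]; ring
          nlinarith [hineq, e1]
        have hfinal : h ℓ x0 ≤ B / D := (le_div_iff₀ hDpos).mpr hmul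
        refine hfinal.trans ?_
        have hBD : B / D = ∑ i ∈ Finset.Ico ℓ j, c.r x0 i * pathSum c.rmax ℓ i := by
          rw [hBdef, Finset.sum_div]
          refine Finset.sum_congr rfl fun i hi => ?_
          rw [Finset.mem_Ico] at hi
          rw [LevelChain.r, if_neg (by omega : ¬ i = c.lev x0), hx0lev, hDeq]
          ring
        rw [hBD, pathSum_of_lt c.rmax hlt]
        refine Finset.sum_le_sum fun i hi => ?_
        rw [Finset.mem_Ico] at hi
        refine mul_le_mul_of_nonneg_right (aux_r_le_rmax c hx0lev i)
          (pathSum_nonneg c.rmax ℓ i fun a b ha hb hc => hrmax0 a b ha hb (by omega))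
  intro j hlj hjk x hx
  exact le_trans (hA j hlj.le hjk x hx) (hB j hlj.le hjk (j - ℓ) ℓ le_rfl hlj.le le_rfl)
end

section
/- Let 1 ≤ ℓ < k ≤ K and let P[ℓ,k] be a path from level k to level ℓ. For each j ∈ P(ℓ,k] define c_{j,ℓ} = Π_{i∈P(ℓ,j]} r_min(X_i, S_{P[ℓ,i)}), where S_{P[ℓ,i)} = ∪_{v∈P[ℓ,i)} S_v, r(x, S_{P[ℓ,i)}) = Σ_{v∈P[ℓ,i)} r(x,S_v), and r_min(X_i, S_{P[ℓ,i)}) = min_{x∈S_i} r(x, S_{P[ℓ,i)}); set c_{j,ℓ} = 0 for j ∈ (ℓ,k] not belonging to P(ℓ,k]. Then c_{j,ℓ} ≤ h_min(X_j,S_ℓ) for every ℓ < j ≤ k. -/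
open Finset

variable {S : Type*} [Fintype S]

/-- Explicit lower-bound coefficients along a path `P[ℓ,k]`:
for `j ∈ P(ℓ,k]` let `c_{j,ℓ} = Π_{i∈P(ℓ,j]} r_min(X_i, S_{P[ℓ,i)})`, where
`r(x, S_{P[ℓ,i)}) = Σ_{v∈P[ℓ,i)} r(x,S_v)`, and set `c_{j,ℓ} = 0` for `j ∈ (ℓ,k]`
off the path. Then `c_{j,ℓ} ≤ h_min(X_j,S_ℓ)` for every `ℓ < j ≤ k`. -/
theorem path_explicit_lower_coefficients_le_hitProb
    (c : LevelChain S) (hreach : c.Reachable)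
    (h : ℕ → S → ℝ) (hh : c.IsHitProb h)
    (ℓ k : ℕ) (hℓ : 1 ≤ ℓ) (hℓk : ℓ < k) (hk : k ≤ c.K)
    (P : Finset ℕ) (hPsub : P ⊆ Finset.Icc ℓ k) (hℓP : ℓ ∈ P) (hkP : k ∈ P)
    (cf : ℕ → ℝ)
    (hcfP : ∀ j ∈ P, j ≠ ℓ →
      cf j = ∏ i ∈ P ∩ Finset.Ioc ℓ j,
        sInf ((fun x => ∑ v ∈ P ∩ Finset.Ico ℓ i, c.r x v) '' {x | c.lev x = i}))
    (hoff : ∀ j, ℓ < j → j ≤ k → j ∉ P → cf j = 0) :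
    ∀ j, ℓ < j → j ≤ k → ∀ x, c.lev x = j → cf j ≤ h ℓ x := by
  classical
  obtain ⟨hh01, hh1, hh0, hhrec⟩ := hh
  -- disjointness of levels
  have hdisjlev : ∀ a b : ℕ, a ≠ b → Disjoint (c.level a) (c.level b) := by
    intro a b hab
    rw [Finset.disjoint_left]
    intro y hya hyb
    simp only [LevelChain.level, Finset.mem_filter, Finset.mem_univ, true_and] at hya hyb
    omega
  -- positivity of denominator
  have hdenom : ∀ x : S, 1 ≤ c.lev x → c.lev x ≤ c.K →
      0 < 1 - c.pSet x (c.level (c.lev x)) := by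
    intro x h1 h2
    have hd : Disjoint (c.levels 0 (c.lev x - 1)) (c.level (c.lev x)) := by
      rw [Finset.disjoint_left]
      intro y hy1 hy2
      simp only [LevelChain.levels, LevelChain.level, Finset.mem_filter, Finset.mem_univ,
        true_and] at hy1 hy2
      omega
    have hsum : c.pSet x (c.levels 0 (c.lev x - 1)) + c.pSet x (c.level (c.lev x)) ≤ 1 := by
      rw [← c.p_row_sum x, LevelChain.pSet, LevelChain.pSet, ← Finset.sum_union hd]
      exact Finset.sum_le_sum_of_subset_of_nonneg (Finset.subset_univ _)
        (fun y _ _ => c.p_nonneg x y)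
    have hpos := hreach (c.lev x) h1 h2 x rfl
    linarith
  -- nonnegativity of r
  have hr_nonneg : ∀ x : S, 1 ≤ c.lev x → c.lev x ≤ c.K → ∀ v, 0 ≤ c.r x v := by
    intro x h1 h2 v
    rw [LevelChain.r]
    split
    · exact le_refl 0
    · exact div_nonneg (Finset.sum_nonneg fun y _ => c.p_nonneg x y) (hdenom x h1 h2).le
  -- sums of conditional probabilities are at most one
  have hrsum_le_one : ∀ x : S, 1 ≤ c.lev x → c.lev x ≤ c.K → ∀ T : Finset ℕ, c.lev x ∉ T →
      ∑ v ∈ T, c.r x v ≤ 1 := by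
    intro x h1 h2 T hT
    have hD := hdenom x h1 h2
    have hstep : ∀ v ∈ T, c.r x v
        = c.pSet x (c.level v) / (1 - c.pSet x (c.level (c.lev x))) := by
      intro v hv
      rw [LevelChain.r, if_neg (by rintro rfl; exact hT hv)]
    rw [Finset.sum_congr rfl hstep, ← Finset.sum_div, div_le_one hD]
    have hpd : (↑(insert (c.lev x) T) : Set ℕ).PairwiseDisjoint c.level := by
      intro a _ b _ hab
      exact hdisjlev a b hab
    have key : ∑ v ∈ insert (c.lev x) T, c.pSet x (c.level v) ≤ 1 := by
      rw [← c.p_row_sum x]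
      simp only [LevelChain.pSet]
      rw [← Finset.sum_biUnion hpd]
      exact Finset.sum_le_sum_of_subset_of_nonneg (Finset.subset_univ _)
        (fun y _ _ => c.p_nonneg x y)
    rw [Finset.sum_insert hT] at key
    linarith
  -- abbreviation for the r_min quantities
  set rs : ℕ → ℝ := fun i =>
    sInf ((fun x => ∑ v ∈ P ∩ Finset.Ico ℓ i, c.r x v) '' {x | c.lev x = i}) with hrsdef
  have hbdd : ∀ i, ℓ < i → i ≤ k →
      BddBelow ((fun x => ∑ v ∈ P ∩ Finset.Ico ℓ i, c.r x v) '' {x | c.lev x = i}) := by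
    intro i hi1 hi2
    refine ⟨0, ?_⟩
    rintro a ⟨x, hx, rfl⟩
    have hx' : c.lev x = i := hx
    exact Finset.sum_nonneg fun v _ => hr_nonneg x (by omega) (by omega) v
  have hrs_nonneg : ∀ i, ℓ < i → i ≤ k → 0 ≤ rs i := by
    intro i hi1 hi2
    apply Real.sInf_nonneg
    rintro a ⟨x, hx, rfl⟩
    have hx' : c.lev x = i := hx
    exact Finset.sum_nonneg fun v _ => hr_nonneg x (by omega) (by omega) v
  have hrs_le_one : ∀ i, ℓ < i → i ≤ k → rs i ≤ 1 := by
    intro i hi1 hi2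
    obtain ⟨x0, hx0⟩ := c.level_nonempty i (le_trans hi2 hk)
    have hmem : (∑ v ∈ P ∩ Finset.Ico ℓ i, c.r x0 v)
        ∈ ((fun x => ∑ v ∈ P ∩ Finset.Ico ℓ i, c.r x v) '' {x | c.lev x = i}) :=
      ⟨x0, hx0, rfl⟩
    refine le_trans (csInf_le (hbdd i hi1 hi2) hmem) ?_
    refine hrsum_le_one x0 (by omega) (by omega) _ ?_
    simp only [Finset.mem_inter, Finset.mem_Ico, hx0]
    omega
  -- facts about members of P
  have hPfacts : ∀ i ∈ P, ℓ ≤ i ∧ i ≤ k := by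
    intro i hi
    have := hPsub hi
    rw [Finset.mem_Icc] at this
    exact this
  -- the product is monotone (antitone) under inclusion of index sets
  have hB_nonneg : ∀ v, 0 ≤ ∏ i ∈ P ∩ Finset.Ioc ℓ v, rs i := by
    intro v
    refine Finset.prod_nonneg fun i hi => ?_
    rw [Finset.mem_inter, Finset.mem_Ioc] at hi
    exact hrs_nonneg i hi.2.1 (hPfacts i hi.1).2
  -- main claim, by strong induction
  have key : ∀ j, j ∈ P → ∀ x, c.lev x = j →
      (∏ i ∈ P ∩ Finset.Ioc ℓ j, rs i) ≤ h ℓ x := by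
    intro j
    induction j using Nat.strong_induction_on with
    | _ j IH =>
    intro hjP x hx
    obtain ⟨hjl, hjk⟩ := hPfacts j hjP
    rcases eq_or_lt_of_le hjl with hje | hjlt
    · -- base case j = ℓ
      rw [← hje, Finset.Ioc_self, Finset.inter_empty, Finset.prod_empty]
      rw [hh1 ℓ x (by omega)]
    · -- inductive step ℓ < j
      have hjK : j ≤ c.K := le_trans hjk hk
      have hlevne : (c.level j).Nonempty := by
        obtain ⟨x0, hx0⟩ := c.level_nonempty j hjK
        exact ⟨x0, by simp [LevelChain.level, hx0]⟩
      obtain ⟨xm, hxm_mem, hxm_min⟩ := Finset.exists_min_image (c.level j) (h ℓ) hlevne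
      have hxm_lev : c.lev xm = j := by
        simpa [LevelChain.level] using hxm_mem
      have hH_nonneg : 0 ≤ h ℓ xm := (hh01 ℓ xm).1
      -- the set of lower path levels
      set L := P ∩ Finset.Ico ℓ j with hL
      have hℓL : ℓ ∈ L := by
        rw [hL, Finset.mem_inter, Finset.mem_Ico]
        exact ⟨hℓP, le_refl ℓ, hjlt⟩
      have hLne : L.Nonempty := ⟨ℓ, hℓL⟩
      set j' := L.max' hLne with hj'def
      have hj'L : j' ∈ L := L.max'_mem hLne
      have hj'facts : j' ∈ P ∧ ℓ ≤ j' ∧ j' < j := by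
        rw [hL, Finset.mem_inter, Finset.mem_Ico] at hj'L
        exact ⟨hj'L.1, hj'L.2.1, hj'L.2.2⟩
      -- B j' ≤ B v for all v ∈ L, and B v ≤ h ℓ y on level v
      have hBmono : ∀ v ∈ L, (∏ i ∈ P ∩ Finset.Ioc ℓ j', rs i)
          ≤ ∏ i ∈ P ∩ Finset.Ioc ℓ v, rs i := by
        intro v hvL
        have hvj' : v ≤ j' := L.le_max' v hvL
        have hsub : P ∩ Finset.Ioc ℓ v ⊆ P ∩ Finset.Ioc ℓ j' :=
          Finset.inter_subset_inter (le_refl P) (Finset.Ioc_subset_Ioc_right hvj')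
        rw [← Finset.prod_sdiff hsub]
        have h1 : (∏ i ∈ (P ∩ Finset.Ioc ℓ j') \ (P ∩ Finset.Ioc ℓ v), rs i) ≤ 1 := by
          refine Finset.prod_le_one (fun i hi => ?_) (fun i hi => ?_)
          · have hi' := Finset.sdiff_subset hi
            rw [Finset.mem_inter, Finset.mem_Ioc] at hi'
            exact hrs_nonneg i hi'.2.1 (hPfacts i hi'.1).2
          · have hi' := Finset.sdiff_subset hi
            rw [Finset.mem_inter, Finset.mem_Ioc] at hi'
            exact hrs_le_one i hi'.2.1 (hPfacts i hi'.1).2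
        calc (∏ i ∈ (P ∩ Finset.Ioc ℓ j') \ (P ∩ Finset.Ioc ℓ v), rs i)
              * ∏ i ∈ P ∩ Finset.Ioc ℓ v, rs i
            ≤ 1 * ∏ i ∈ P ∩ Finset.Ioc ℓ v, rs i :=
              mul_le_mul_of_nonneg_right h1 (hB_nonneg v)
          _ = ∏ i ∈ P ∩ Finset.Ioc ℓ v, rs i := one_mul _
      -- recursion for h at xm
      have hrec : h ℓ xm = ∑ y ∈ c.levels ℓ j, c.p xm y * h ℓ y := by
        have := hhrec ℓ xm (by omega)
        rwa [hxm_lev] at this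
      -- restrict the sum to the levels in insert j L
      have hjnotL : j ∉ L := by
        rw [hL, Finset.mem_inter, Finset.mem_Ico]
        omega
      have hTsum : (∑ y ∈ c.level j, c.p xm y * h ℓ y)
          + ∑ v ∈ L, ∑ y ∈ c.level v, c.p xm y * h ℓ y ≤ h ℓ xm := by
        rw [hrec]
        rw [show (∑ y ∈ c.level j, c.p xm y * h ℓ y)
            + ∑ v ∈ L, ∑ y ∈ c.level v, c.p xm y * h ℓ y
            = ∑ v ∈ insert j L, ∑ y ∈ c.level v, c.p xm y * h ℓ y from
          (Finset.sum_insert (f := fun v => ∑ y ∈ c.level v, c.p xm y * h ℓ y) hjnotL).symm]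
        have hpd : (↑(insert j L) : Set ℕ).PairwiseDisjoint c.level := by
          intro a _ b _ hab
          exact hdisjlev a b hab
        rw [← Finset.sum_biUnion hpd]
        refine Finset.sum_le_sum_of_subset_of_nonneg ?_
          (fun y _ _ => mul_nonneg (c.p_nonneg xm y) (hh01 ℓ y).1)
        intro y hy
        rw [Finset.mem_biUnion] at hy
        obtain ⟨v, hv, hyv⟩ := hy
        simp only [LevelChain.level, Finset.mem_filter, Finset.mem_univ, true_and] at hyv
        rw [Finset.mem_insert] at hv
        simp only [LevelChain.levels, Finset.mem_filter, Finset.mem_univ, true_and]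
        rcases hv with rfl | hv
        · omega
        · rw [hL, Finset.mem_inter, Finset.mem_Ico] at hv
          omega
      -- bound the same-level term from below
      have hself : c.pSet xm (c.level j) * h ℓ xm ≤ ∑ y ∈ c.level j, c.p xm y * h ℓ y := by
        rw [LevelChain.pSet, Finset.sum_mul]
        exact Finset.sum_le_sum fun y hy =>
          mul_le_mul_of_nonneg_left (hxm_min y hy) (c.p_nonneg xm y)
      -- bound lower-level terms from below
      have hlow : ∀ v ∈ L, c.pSet xm (c.level v) * (∏ i ∈ P ∩ Finset.Ioc ℓ j', rs i)
          ≤ ∑ y ∈ c.level v, c.p xm y * h ℓ y := by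
        intro v hvL
        have hvL' := hvL
        rw [hL, Finset.mem_inter, Finset.mem_Ico] at hvL'
        rw [LevelChain.pSet, Finset.sum_mul]
        refine Finset.sum_le_sum fun y hy => ?_
        have hyv : c.lev y = v := by
          simpa [LevelChain.level] using hy
        have hBh : (∏ i ∈ P ∩ Finset.Ioc ℓ v, rs i) ≤ h ℓ y := by
          rcases eq_or_lt_of_le hvL'.2.1 with hve | hvgt
          · rw [← hve, Finset.Ioc_self, Finset.inter_empty, Finset.prod_empty,
              hh1 ℓ y (by omega)]
          · exact IH v hvL'.2.2 hvL'.1 y hyv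
        exact mul_le_mul_of_nonneg_left (le_trans (hBmono v hvL) hBh) (c.p_nonneg xm y)
      -- combine
      have hcomb : c.pSet xm (c.level j) * h ℓ xm
          + (∑ v ∈ L, c.pSet xm (c.level v)) * (∏ i ∈ P ∩ Finset.Ioc ℓ j', rs i)
          ≤ h ℓ xm := by
        rw [Finset.sum_mul]
        have h2 : (∑ v ∈ L, c.pSet xm (c.level v) * (∏ i ∈ P ∩ Finset.Ioc ℓ j', rs i))
            ≤ ∑ v ∈ L, ∑ y ∈ c.level v, c.p xm y * h ℓ y :=
          Finset.sum_le_sum hlow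
        linarith
      have hD : 0 < 1 - c.pSet xm (c.level j) := by
        have := hdenom xm (by omega) (by omega)
        rwa [hxm_lev] at this
      -- divide out
      have hdiv : ((∑ v ∈ L, c.pSet xm (c.level v)) / (1 - c.pSet xm (c.level j)))
          * (∏ i ∈ P ∩ Finset.Ioc ℓ j', rs i) ≤ h ℓ xm := by
        rw [div_mul_eq_mul_div, div_le_iff₀ hD]
        nlinarith [hcomb]
      -- the divided sum is the sum of the r's
      have hrL : ∑ v ∈ L, c.r xm v
          = (∑ v ∈ L, c.pSet xm (c.level v)) / (1 - c.pSet xm (c.level j)) := by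
        rw [Finset.sum_div]
        refine Finset.sum_congr rfl fun v hv => ?_
        rw [hL, Finset.mem_inter, Finset.mem_Ico] at hv
        rw [LevelChain.r, if_neg (by omega), hxm_lev]
      -- rs j ≤ the sum of r's at xm
      have hrsj : rs j ≤ ∑ v ∈ L, c.r xm v := by
        rw [hrsdef]
        exact csInf_le (hbdd j hjlt hjk) ⟨xm, hxm_lev, rfl⟩
      have hfinal : rs j * (∏ i ∈ P ∩ Finset.Ioc ℓ j', rs i) ≤ h ℓ xm := by
        calc rs j * (∏ i ∈ P ∩ Finset.Ioc ℓ j', rs i)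
            ≤ (∑ v ∈ L, c.r xm v) * (∏ i ∈ P ∩ Finset.Ioc ℓ j', rs i) :=
              mul_le_mul_of_nonneg_right hrsj (hB_nonneg j')
          _ ≤ h ℓ xm := by rw [hrL]; exact hdiv
      -- identify the full product
      have hsetEq : P ∩ Finset.Ioc ℓ j = insert j (P ∩ Finset.Ioc ℓ j') := by
        ext v
        simp only [Finset.mem_inter, Finset.mem_Ioc, Finset.mem_insert]
        constructor
        · rintro ⟨hvP, hv1, hv2⟩
          rcases eq_or_lt_of_le hv2 with hvj | hvj
          · exact Or.inl hvj
          · refine Or.inr ⟨hvP, hv1, ?_⟩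
            exact L.le_max' v (by rw [hL, Finset.mem_inter, Finset.mem_Ico]; exact ⟨hvP, by omega, hvj⟩)
        · rintro (rfl | ⟨hvP, hv1, hv2⟩)
          · exact ⟨hjP, hjlt, le_refl v⟩
          · exact ⟨hvP, hv1, by omega⟩
      have hjnot : j ∉ P ∩ Finset.Ioc ℓ j' := by
        rw [Finset.mem_inter, Finset.mem_Ioc]
        push_neg
        intro _ _
        omega
      rw [hsetEq, Finset.prod_insert hjnot]
      exact le_trans hfinal (hxm_min x (by simp [LevelChain.level, hx]))
  -- conclude
  intro j hj1 hj2 x hx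
  by_cases hjP' : j ∈ P
  · rw [hcfP j hjP' (by omega)]
    exact key j hjP' x hx
  · rw [hoff j hj1 hj2 hjP']
    exact (hh01 ℓ x).1
end
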